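/- arXiv:2206.05062 — 8 statements merged into one kernel-verified Lean document; each statement's English description precedes it below -/
import Mathlib

section
/- For all nonnegative integers n, m, p: P(n,m,p) = Σ_{k=0}^{⌊n/2⌋} Σ_{l=0}^{⌊m/2⌋} Q(n−2k, m−2l, p) · P(k, l, p). -/
/-- `P n m p` : number of integer partitions of `n` into exactly `m` parts
with each part at most `p`. -/
def P (n m p : ℕ) : ℕ :=
  Fintype.card {π : n.Partition // π.parts.card = m ∧ ∀ i ∈ π.parts, i ≤ p}

/-- `Q n m p` : number of integer partitions of `n` into exactly `m` distinct parts
with each part at most `p`. -/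
def Q (n m p : ℕ) : ℕ :=
  Fintype.card {π : n.Partition // π.parts.card = m ∧ π.parts.Nodup ∧ ∀ i ∈ π.parts, i ≤ p}

/-- the "odd multiplicity" part of a multiset, each such element once -/
def dOf (s : Multiset ℕ) : Multiset ℕ := (s.toFinset.filter fun a => ¬ Even (s.count a)).val

/-- the "halved" multiset: each element with half its multiplicity -/
def hOf (s : Multiset ℕ) : Multiset ℕ :=
  ∑ a ∈ s.toFinset, Multiset.replicate (s.count a / 2) a

lemma count_dOf (s : Multiset ℕ) (a : ℕ) :
    (dOf s).count a = if Even (s.count a) then 0 else 1 := by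
  rw [dOf, Multiset.count_eq_of_nodup (Finset.nodup _)]
  by_cases h : Even (s.count a)
  · simp [Finset.mem_filter, h]
  · have : a ∈ s.toFinset := by
      rw [Multiset.mem_toFinset, ← Multiset.count_pos]
      rcases Nat.eq_zero_or_pos (s.count a) with h0 | h0
      · exact absurd (h0 ▸ Even.zero) h
      · exact h0
    simp [Finset.mem_filter, h, Multiset.mem_toFinset.mp this]

lemma count_hOf (s : Multiset ℕ) (a : ℕ) : (hOf s).count a = s.count a / 2 := by
  rw [hOf, Multiset.count_sum']
  simp only [Multiset.count_replicate]
  rw [Finset.sum_ite_eq' s.toFinset a (fun b => s.count b / 2)]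
  by_cases h : a ∈ s.toFinset
  · rw [if_pos h]
  · rw [if_neg h]
    have h0 : s.count a = 0 := by
      rwa [Multiset.mem_toFinset, ← Multiset.count_pos, Nat.pos_iff_ne_zero, not_not] at h
    simp [h0]

lemma dOf_nodup (s : Multiset ℕ) : (dOf s).Nodup := Finset.nodup _

lemma decompose (s : Multiset ℕ) : dOf s + (hOf s + hOf s) = s := by
  ext a
  rw [Multiset.count_add, Multiset.count_add, count_dOf, count_hOf]
  rcases Nat.even_or_odd (s.count a) with h | h
  · rw [if_pos h]
    rw [Nat.even_iff] at h
    omega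
  · rw [if_neg (Nat.not_even_iff_odd.mpr h)]
    rw [Nat.odd_iff] at h
    omega

lemma dOf_comp (d t : Multiset ℕ) (hd : d.Nodup) : dOf (d + (t + t)) = d := by
  ext a
  have hle : d.count a ≤ 1 := (Multiset.nodup_iff_count_le_one.mp hd) a
  have hc : (d + (t + t)).count a = d.count a + (t.count a + t.count a) := by
    simp [Multiset.count_add]
  rw [count_dOf, hc]
  simp only [Nat.even_iff]
  split_ifs with hev <;> omega

lemma hOf_comp (d t : Multiset ℕ) (hd : d.Nodup) : hOf (d + (t + t)) = t := by
  ext a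
  rw [count_hOf]
  have hle : d.count a ≤ 1 := (Multiset.nodup_iff_count_le_one.mp hd) a
  have hc : (d + (t + t)).count a = d.count a + (t.count a + t.count a) := by
    simp [Multiset.count_add]
  rw [hc]
  omega

lemma mem_of_mem_dOf {s : Multiset ℕ} {a : ℕ} (h : a ∈ dOf s) : a ∈ s := by
  by_contra hc
  have h0 : s.count a = 0 := by rwa [← Multiset.count_eq_zero] at hc
  have h1 := count_dOf s a
  rw [h0, if_pos Even.zero] at h1
  rw [← Multiset.count_pos, h1] at h
  exact absurd h (lt_irrefl 0)

lemma mem_of_mem_hOf {s : Multiset ℕ} {a : ℕ} (h : a ∈ hOf s) : a ∈ s := by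
  rw [← Multiset.count_pos] at h ⊢
  rw [count_hOf] at h
  omega

open Finset in
lemma P_eq (n m p : ℕ) :
    P n m p = (Finset.univ.filter
      (fun π : n.Partition => π.parts.card = m ∧ ∀ i ∈ π.parts, i ≤ p)).card := by
  rw [P, Fintype.card_subtype]

open Finset in
lemma Q_eq (n m p : ℕ) :
    Q n m p = (Finset.univ.filter
      (fun π : n.Partition => π.parts.card = m ∧ π.parts.Nodup ∧ ∀ i ∈ π.parts, i ≤ p)).card := by
  rw [Q, Fintype.card_subtype]

/-- The partition made of the odd-multiplicity parts of `π`. -/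
def splitQ {n : ℕ} (π : n.Partition) : (n - 2 * (hOf π.parts).sum).Partition where
  parts := dOf π.parts
  parts_pos := fun {i} hi => π.parts_pos (mem_of_mem_dOf hi)
  parts_sum := by
    have := congrArg Multiset.sum (decompose π.parts)
    rw [Multiset.sum_add, Multiset.sum_add, π.parts_sum] at this
    omega

/-- The partition made of halved multiplicities of `π`. -/
def splitP {n : ℕ} (π : n.Partition) : ((hOf π.parts).sum).Partition where
  parts := hOf π.parts
  parts_pos := fun {i} hi => π.parts_pos (mem_of_mem_hOf hi)
  parts_sum := rfl

lemma sum_split {n : ℕ} (π : n.Partition) :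
    (dOf π.parts).sum + ((hOf π.parts).sum + (hOf π.parts).sum) = n := by
  have := congrArg Multiset.sum (decompose π.parts)
  rwa [Multiset.sum_add, Multiset.sum_add, π.parts_sum] at this

lemma card_split {n : ℕ} (π : n.Partition) :
    Multiset.card (dOf π.parts) + (Multiset.card (hOf π.parts)
      + Multiset.card (hOf π.parts)) = Multiset.card π.parts := by
  have := congrArg Multiset.card (decompose π.parts)
  rwa [Multiset.card_add, Multiset.card_add] at this

/-- Combine a distinct-part partition and a doubled partition. -/
def combine {n k : ℕ} (hk : 2 * k ≤ n) (σ : (n - 2 * k).Partition) (τ : k.Partition) :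
    n.Partition where
  parts := σ.parts + (τ.parts + τ.parts)
  parts_pos := fun {i} hi => by
    rcases Multiset.mem_add.mp hi with h | h
    · exact σ.parts_pos h
    · rcases Multiset.mem_add.mp h with h | h <;> exact τ.parts_pos h
  parts_sum := by
    rw [Multiset.sum_add, Multiset.sum_add, σ.parts_sum, τ.parts_sum]
    omega

theorem stmt_0 (n m p : ℕ) :
    P n m p = ∑ k ∈ Finset.range (n / 2 + 1), ∑ l ∈ Finset.range (m / 2 + 1),
      Q (n - 2 * k) (m - 2 * l) p * P k l p := by
  have key : (Finset.univ.filter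
        (fun π : n.Partition => π.parts.card = m ∧ ∀ i ∈ π.parts, i ≤ p)).card
      = ((Finset.range (n / 2 + 1) ×ˢ Finset.range (m / 2 + 1)).sigma
          (fun kl => (Finset.univ.filter (fun π : (n - 2 * kl.1).Partition =>
              π.parts.card = m - 2 * kl.2 ∧ π.parts.Nodup ∧ ∀ i ∈ π.parts, i ≤ p))
            ×ˢ (Finset.univ.filter (fun π : kl.1.Partition =>
              π.parts.card = kl.2 ∧ ∀ i ∈ π.parts, i ≤ p)))).card := by
    refine Finset.card_bij'
      (fun π _ => ⟨((hOf π.parts).sum, Multiset.card (hOf π.parts)), (splitQ π, splitP π)⟩)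
      (fun b hb => combine (show 2 * b.1.1 ≤ n by
        have := (Finset.mem_sigma.mp hb).1
        rw [Finset.mem_product, Finset.mem_range, Finset.mem_range] at this
        omega) b.2.1 b.2.2)
      ?_ ?_ ?_ ?_
    · -- forward map lands in sigma
      intro π hπ
      simp only [Finset.mem_filter, Finset.mem_univ, true_and] at hπ
      obtain ⟨hcard, hbd⟩ := hπ
      have hsum := sum_split π
      have hcard' := card_split π
      rw [hcard] at hcard'
      simp only [Finset.mem_sigma, Finset.mem_product, Finset.mem_range, Finset.mem_filter,
        Finset.mem_univ, true_and]
      refine ⟨⟨by omega, by omega⟩,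
        ⟨?_, dOf_nodup _, fun i hi => hbd i (mem_of_mem_dOf hi)⟩,
        ?_, fun i hi => hbd i (mem_of_mem_hOf hi)⟩
      · show Multiset.card (dOf π.parts) = m - 2 * Multiset.card (hOf π.parts)
        omega
      · rfl
    · -- backward map lands in the left-hand finset
      intro b hb
      simp only [Finset.mem_sigma, Finset.mem_product, Finset.mem_range, Finset.mem_filter,
        Finset.mem_univ, true_and] at hb
      obtain ⟨⟨hk, hl⟩, ⟨hc1, -, hb1⟩, hc2, hb2⟩ := hb
      simp only [Finset.mem_filter, Finset.mem_univ, true_and]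
      constructor
      · show Multiset.card (b.2.1.parts + (b.2.2.parts + b.2.2.parts)) = m
        rw [Multiset.card_add, Multiset.card_add, hc1, hc2]
        omega
      · intro i hi
        rcases Multiset.mem_add.mp hi with h | h
        · exact hb1 i h
        · rcases Multiset.mem_add.mp h with h | h <;> exact hb2 i h
    · -- left inverse
      intro π hπ
      exact Nat.Partition.ext (decompose π.parts)
    · -- right inverse
      rintro ⟨⟨k, l⟩, σ, τ⟩ hb
      simp only [Finset.mem_sigma, Finset.mem_product, Finset.mem_range, Finset.mem_filter,
        Finset.mem_univ, true_and] at hb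
      obtain ⟨⟨hk, hl⟩, ⟨hc1, hnd, hb1⟩, hc2, hb2⟩ := hb
      have hd : dOf (σ.parts + (τ.parts + τ.parts)) = σ.parts := dOf_comp _ _ hnd
      have hh : hOf (σ.parts + (τ.parts + τ.parts)) = τ.parts := hOf_comp _ _ hnd
      have key : ∀ (k' l' : ℕ), k' = k → l' = l →
          ∀ (σ' : Nat.Partition (n - 2 * k')) (τ' : Nat.Partition k'),
          σ'.parts = σ.parts → τ'.parts = τ.parts →
          (⟨(k', l'), (σ', τ')⟩ : Σ kl : ℕ × ℕ,
            Nat.Partition (n - 2 * kl.1) × Nat.Partition kl.1) = ⟨(k, l), (σ, τ)⟩ := by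
        intro k' l' hk' hl'
        subst hk'; subst hl'
        intro σ' τ' h1 h2
        exact congrArg (Sigma.mk _)
          (Prod.ext (Nat.Partition.ext h1) (Nat.Partition.ext h2))
      exact key _ _
        (show (hOf (σ.parts + (τ.parts + τ.parts))).sum = k by rw [hh]; exact τ.parts_sum)
        (show Multiset.card (hOf (σ.parts + (τ.parts + τ.parts))) = l by rw [hh]; exact hc2)
        _ _ hd hh
  rw [P_eq, key, Finset.card_sigma, Finset.sum_product]
  refine Finset.sum_congr rfl fun k _ => Finset.sum_congr rfl fun l _ => ?_
  rw [Finset.card_product, Q_eq, P_eq]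
end

section
/- For all nonnegative integers n, m, p: P(n+m, m, p+1) = Σ_{k=0}^{⌊n/2⌋} Σ_{l=0}^{⌊m/2⌋} Q*(n−2k, m−2l, p) · P(k, l, p), where Q*(n,m,p) = Σ_{j=0}^{m} Q(n,j,p). -/
/-- `Qstar n m p` : number of integer partitions of `n` into at most `m` distinct parts
with each part at most `p`. -/
def Qstar (n m p : ℕ) : ℕ := ∑ j ∈ Finset.range (m + 1), Q n j p

open Multiset


-- helper card lemmas
lemma nat_card_sigma {ι : Type*} [Fintype ι] (f : ι → Type*) [∀ i, Finite (f i)] :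
    Nat.card (Σ i, f i) = ∑ i, Nat.card (f i) := by
  have := fun i => Fintype.ofFinite (f i)
  simp [Nat.card_eq_fintype_card, Fintype.card_sigma]

-- multiset subtypes
def MP (n m p : ℕ) := {s : Multiset ℕ // s.sum = n ∧ Multiset.card s = m ∧ ∀ i ∈ s, 1 ≤ i ∧ i ≤ p}
def MPle (n m p : ℕ) := {s : Multiset ℕ // s.sum = n ∧ Multiset.card s ≤ m ∧ ∀ i ∈ s, 1 ≤ i ∧ i ≤ p}
def MQ (n m p : ℕ) := {s : Multiset ℕ // s.sum = n ∧ Multiset.card s = m ∧ s.Nodup ∧ ∀ i ∈ s, 1 ≤ i ∧ i ≤ p}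
def MQle (n m p : ℕ) := {s : Multiset ℕ // s.sum = n ∧ Multiset.card s ≤ m ∧ s.Nodup ∧ ∀ i ∈ s, 1 ≤ i ∧ i ≤ p}

def equivMP (n m p : ℕ) :
    {π : n.Partition // π.parts.card = m ∧ ∀ i ∈ π.parts, i ≤ p} ≃ MP n m p where
  toFun x := ⟨x.1.parts, x.1.parts_sum, x.2.1, fun i hi => ⟨x.1.parts_pos hi, x.2.2 i hi⟩⟩
  invFun s := ⟨⟨s.1, fun hi => (s.2.2.2 _ hi).1, s.2.1⟩, s.2.2.1, fun i hi => (s.2.2.2 i hi).2⟩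
  left_inv x := rfl
  right_inv s := rfl

def equivMQ (n m p : ℕ) :
    {π : n.Partition // π.parts.card = m ∧ π.parts.Nodup ∧ ∀ i ∈ π.parts, i ≤ p} ≃ MQ n m p where
  toFun x := ⟨x.1.parts, x.1.parts_sum, x.2.1, x.2.2.1, fun i hi => ⟨x.1.parts_pos hi, x.2.2.2 i hi⟩⟩
  invFun s := ⟨⟨s.1, fun hi => (s.2.2.2.2 _ hi).1, s.2.1⟩, s.2.2.1, s.2.2.2.1,
    fun i hi => (s.2.2.2.2 i hi).2⟩
  left_inv x := rfl
  right_inv s := rfl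

instance (n m p : ℕ) : Finite (MP n m p) := Finite.of_equiv _ (equivMP n m p)
instance (n m p : ℕ) : Finite (MQ n m p) := Finite.of_equiv _ (equivMQ n m p)

lemma P_eq_s1 (n m p : ℕ) : P n m p = Nat.card (MP n m p) := by
  rw [P, ← Nat.card_eq_fintype_card]; exact Nat.card_congr (equivMP n m p)

lemma Q_eq_s1 (n m p : ℕ) : Q n m p = Nat.card (MQ n m p) := by
  rw [Q, ← Nat.card_eq_fintype_card]; exact Nat.card_congr (equivMQ n m p)

def equivMQle (n m p : ℕ) : MQle n m p ≃ Σ j : Fin (m + 1), MQ n j p where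
  toFun s := ⟨⟨Multiset.card s.1, Nat.lt_succ_of_le s.2.2.1⟩,
    ⟨s.1, s.2.1, rfl, s.2.2.2.1, s.2.2.2.2⟩⟩
  invFun x := ⟨x.2.1, x.2.2.1, by rw [x.2.2.2.1]; exact Nat.lt_succ_iff.mp x.1.2, x.2.2.2.2.1, x.2.2.2.2.2⟩
  left_inv := by
    rintro ⟨s, h1, h2, h3, h4⟩; rfl
  right_inv := by
    rintro ⟨⟨j, hj⟩, ⟨s, h1, h2, h3, h4⟩⟩
    cases h2
    rfl

instance (n m p : ℕ) : Finite (MQle n m p) := Finite.of_equiv _ (equivMQle n m p).symm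

lemma Qstar_eq' (n m p : ℕ) :
    (∑ j ∈ Finset.range (m + 1), Q n j p) = Nat.card (MQle n m p) := by
  rw [Nat.card_congr (equivMQle n m p), nat_card_sigma]
  rw [Fin.sum_univ_eq_sum_range fun j => Nat.card (MQ n j p)]
  exact Finset.sum_congr rfl fun j _ => Q_eq_s1 n j p

/-! ### odd/even multiplicity decomposition -/

def dpart (t : Multiset ℕ) : Multiset ℕ := t.toFinset.val.filter fun a => ¬ 2 ∣ t.count a
def epart (t : Multiset ℕ) : Multiset ℕ :=
  t.toFinset.val.bind fun a => Multiset.replicate (t.count a / 2) a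

lemma count_dpart (t : Multiset ℕ) (a : ℕ) : (dpart t).count a = t.count a % 2 := by
  rw [dpart, count_filter]
  by_cases h : a ∈ t
  · have : t.toFinset.val.count a = 1 := by
      rw [Multiset.count_eq_one_of_mem t.toFinset.nodup (by simpa using h)]
    rw [this]
    have : t.count a ≠ 0 := by simpa using h
    split <;> omega
  · have h0 : t.count a = 0 := by simpa using h
    have : t.toFinset.val.count a = 0 := by
      rw [Multiset.count_eq_zero]; simpa using h
    rw [this, h0]
    simp

lemma count_epart (t : Multiset ℕ) (a : ℕ) : (epart t).count a = t.count a / 2 := by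
  rw [epart, Multiset.count_bind]
  by_cases h : a ∈ t
  · rw [show t.toFinset.val.map (fun b => (Multiset.replicate (t.count b / 2) b).count a)
        = t.toFinset.val.map (fun b => if b = a then t.count b / 2 else 0) from
      Multiset.map_congr rfl fun b _ => Multiset.count_replicate ..]
    have : (∑ b ∈ t.toFinset, if b = a then t.count b / 2 else 0) = t.count a / 2 := by
      rw [Finset.sum_ite_eq' t.toFinset a fun b => t.count b / 2]
      simp [h]
    simpa [Finset.sum] using this
  · have h0 : t.count a = 0 := by simpa using h
    rw [h0]
    simp only [Nat.zero_div]
    rw [Multiset.sum_eq_zero]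
    intro x hx
    simp only [Multiset.mem_map] at hx
    obtain ⟨b, hb, rfl⟩ := hx
    rw [Multiset.count_replicate]
    split
    · subst a; simp_all
    · rfl

lemma dpart_nodup (t : Multiset ℕ) : (dpart t).Nodup :=
  t.toFinset.nodup.filter _

lemma decomp (t : Multiset ℕ) : dpart t + epart t + epart t = t := by
  ext a
  simp only [Multiset.count_add, count_dpart, count_epart]
  omega

lemma dpart_recon {d e : Multiset ℕ} (hd : d.Nodup) : dpart (d + e + e) = d := by
  ext a
  rw [count_dpart]
  simp only [Multiset.count_add]
  have := Multiset.nodup_iff_count_le_one.mp hd a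
  omega

lemma epart_recon {d e : Multiset ℕ} (hd : d.Nodup) : epart (d + e + e) = e := by
  ext a
  rw [count_epart]
  simp only [Multiset.count_add]
  have := Multiset.nodup_iff_count_le_one.mp hd a
  omega

/-! ### subtract-one bijection -/

lemma sum_map_add_one (u : Multiset ℕ) : (u.map (· + 1)).sum = u.sum + Multiset.card u := by
  induction u using Multiset.induction_on with
  | empty => simp
  | cons a s ih => simp [ih]; omega

lemma sum_map_sub_one (u : Multiset ℕ) (h : ∀ x ∈ u, 1 ≤ x) :
    (u.map (· - 1)).sum + Multiset.card u = u.sum := by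
  induction u using Multiset.induction_on with
  | empty => simp
  | cons a s ih =>
    have h1 : 1 ≤ a := h a (Multiset.mem_cons_self a s)
    have := ih fun x hx => h x (Multiset.mem_cons_of_mem hx)
    simp only [Multiset.map_cons, Multiset.sum_cons, Multiset.card_cons]
    omega

def E1 (n m p : ℕ) : MP (n + m) m (p + 1) ≃ MPle n m p where
  toFun := fun ⟨s, hsum, hcard, hmem⟩ => by
    refine ⟨(s.filter (fun x => 2 ≤ x)).map (· - 1), ?_, ?_, ?_⟩
    · have hsum2 : (s.filter (fun x => 2 ≤ x)).sum + (s.filter (fun x => ¬ 2 ≤ x)).sum = n + m := by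
        rw [← Multiset.sum_add, Multiset.filter_add_not, hsum]
      have hcard2 : Multiset.card (s.filter (fun x => 2 ≤ x))
          + Multiset.card (s.filter (fun x => ¬ 2 ≤ x)) = m := by
        rw [← Multiset.card_add, Multiset.filter_add_not, hcard]
      have hone : (s.filter (fun x => ¬ 2 ≤ x)).sum
          = Multiset.card (s.filter (fun x => ¬ 2 ≤ x)) := by
        have h1 : ∀ x ∈ s.filter (fun x => ¬ 2 ≤ x), x = 1 := by
          intro x hx
          have h1 := Multiset.of_mem_filter hx
          have h2 := (hmem x (Multiset.mem_of_mem_filter hx)).1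
          omega
        calc (s.filter (fun x => ¬ 2 ≤ x)).sum
            = (Multiset.replicate (Multiset.card (s.filter (fun x => ¬ 2 ≤ x))) 1).sum := by
              congr 1
              exact Multiset.eq_replicate_card.mpr h1
          _ = _ := by simp
      have h2 := sum_map_sub_one (s.filter (fun x => 2 ≤ x))
        (fun x hx => by have := Multiset.of_mem_filter hx; omega)
      omega
    · simp only [Multiset.card_map]
      calc Multiset.card (s.filter (fun x => 2 ≤ x)) ≤ Multiset.card s :=
            Multiset.card_le_card (Multiset.filter_le _ s)
        _ = m := hcard
    · intro i hi
      simp only [Multiset.mem_map] at hi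
      obtain ⟨x, hx, rfl⟩ := hi
      have h1 := Multiset.of_mem_filter hx
      have h2 := (hmem x (Multiset.mem_of_mem_filter hx)).2
      omega
  invFun := fun ⟨t, hsum, hcard, hmem⟩ => by
    refine ⟨t.map (· + 1) + Multiset.replicate (m - Multiset.card t) 1, ?_, ?_, ?_⟩
    · simp only [Multiset.sum_add, sum_map_add_one, Multiset.sum_replicate, smul_eq_mul, mul_one]
      omega
    · simp only [Multiset.card_add, Multiset.card_map, Multiset.card_replicate]
      omega
    · intro i hi
      rcases Multiset.mem_add.mp hi with hi | hi
      · simp only [Multiset.mem_map] at hi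
        obtain ⟨x, hx, rfl⟩ := hi
        have := hmem x hx
        omega
      · have := Multiset.eq_of_mem_replicate hi
        omega
  left_inv := by
    rintro ⟨s, hsum, hcard, hmem⟩
    apply Subtype.ext
    simp only
    have hmap : ((s.filter (fun x => 2 ≤ x)).map (· - 1)).map (· + 1)
        = s.filter (fun x => 2 ≤ x) := by
      rw [Multiset.map_map]
      have : Multiset.map ((fun x => x + 1) ∘ fun x => x - 1) (s.filter (fun x => 2 ≤ x))
          = Multiset.map id (s.filter (fun x => 2 ≤ x)) :=
        Multiset.map_congr rfl fun x hx => by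
          have := Multiset.of_mem_filter hx; simp only [Function.comp_apply, id_eq]; omega
      rw [this, Multiset.map_id]
    rw [Multiset.card_map, hmap]
    have hone : s.filter (fun x => ¬ 2 ≤ x)
        = Multiset.replicate (m - Multiset.card (s.filter (fun x => 2 ≤ x))) 1 := by
      have h1 : ∀ x ∈ s.filter (fun x => ¬ 2 ≤ x), x = 1 := by
        intro x hx
        have h1 := Multiset.of_mem_filter hx
        have h2 := (hmem x (Multiset.mem_of_mem_filter hx)).1
        omega
      rw [Multiset.eq_replicate_card.mpr h1]
      congr 1
      have hcard2 := congrArg Multiset.card (Multiset.filter_add_not (fun x => 2 ≤ x) s)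
      rw [Multiset.card_add, hcard] at hcard2
      omega
    rw [← hone]
    exact Multiset.filter_add_not _ s
  right_inv := by
    rintro ⟨t, hsum, hcard, hmem⟩
    apply Subtype.ext
    simp only
    have h1 : (t.map (· + 1)).filter (fun x => 2 ≤ x) = t.map (· + 1) := by
      apply Multiset.filter_eq_self.mpr
      intro x hx
      simp only [Multiset.mem_map] at hx
      obtain ⟨y, hy, rfl⟩ := hx
      have := (hmem y hy).1
      omega
    have h2 : (Multiset.replicate (m - Multiset.card t) 1).filter (fun x => 2 ≤ x) = 0 := by
      apply Multiset.filter_eq_nil.mpr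
      intro x hx
      have := Multiset.eq_of_mem_replicate hx
      omega
    rw [Multiset.filter_add, h1, h2, add_zero, Multiset.map_map]
    have : Multiset.map ((fun x => x - 1) ∘ fun x => x + 1) t = Multiset.map id t :=
      Multiset.map_congr rfl fun x _ => by simp
    rw [this, Multiset.map_id]

def Dset (n m p : ℕ) := {de : Multiset ℕ × Multiset ℕ // de.1.Nodup ∧
  de.1.sum + 2 * de.2.sum = n ∧ Multiset.card de.1 + 2 * Multiset.card de.2 ≤ m ∧
  (∀ i ∈ de.1, 1 ≤ i ∧ i ≤ p) ∧ (∀ i ∈ de.2, 1 ≤ i ∧ i ≤ p)}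

def E2 (n m p : ℕ) : MPle n m p ≃ Dset n m p where
  toFun := fun ⟨t, hsum, hcard, hmem⟩ => by
    refine ⟨(dpart t, epart t), dpart_nodup t, ?_, ?_, ?_, ?_⟩
    · have h := congrArg Multiset.sum (decomp t)
      simp only [Multiset.sum_add] at h
      simp only
      omega
    · have h := congrArg Multiset.card (decomp t)
      simp only [Multiset.card_add] at h
      simp only
      omega
    · intro i hi
      refine hmem i (Multiset.mem_of_le ?_ hi)
      calc dpart t ≤ dpart t + epart t + epart t := by
            rw [add_assoc]; exact Multiset.le_add_right _ _
        _ = t := decomp t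
    · intro i hi
      refine hmem i (Multiset.mem_of_le ?_ hi)
      calc epart t ≤ dpart t + epart t + epart t := Multiset.le_add_left _ _
        _ = t := decomp t
  invFun := fun ⟨⟨d, e⟩, hnd, hsum, hcard, hd, he⟩ => by
    refine ⟨d + e + e, ?_, ?_, ?_⟩
    · simp only [Multiset.sum_add]
      simp only at hsum
      omega
    · simp only [Multiset.card_add]
      simp only at hcard
      omega
    · intro i hi
      rcases Multiset.mem_add.mp hi with hi | hi
      · rcases Multiset.mem_add.mp hi with hi | hi
        · exact hd i hi
        · exact he i hi
      · exact he i hi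
  left_inv := by
    rintro ⟨t, hsum, hcard, hmem⟩
    exact Subtype.ext (decomp t)
  right_inv := by
    rintro ⟨⟨d, e⟩, hnd, hsum, hcard, hd, he⟩
    apply Subtype.ext
    simp only at hnd ⊢
    rw [dpart_recon hnd, epart_recon hnd]

def E3 (n m p : ℕ) : Dset n m p ≃
    Σ x : ↥(Finset.range (n / 2 + 1) ×ˢ Finset.range (m / 2 + 1)),
      MQle (n - 2 * (x : ℕ × ℕ).1) (m - 2 * (x : ℕ × ℕ).2) p × MP (x : ℕ × ℕ).1 (x : ℕ × ℕ).2 p where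
  toFun := fun ⟨⟨d, e⟩, hnd, hsum, hcard, hd, he⟩ => by
    simp only at hnd hsum hcard hd he
    refine ⟨⟨(e.sum, Multiset.card e), ?_⟩, ⟨d, ?_, ?_, hnd, hd⟩, ⟨e, rfl, rfl, he⟩⟩
    · rw [Finset.mem_product, Finset.mem_range, Finset.mem_range]
      constructor <;> simp only <;> omega
    · simp only; omega
    · simp only; omega
  invFun := fun y => by
    obtain ⟨x, dd, ee⟩ := y
    have hx := x.2
    rw [Finset.mem_product, Finset.mem_range, Finset.mem_range] at hx
    obtain ⟨d, hd1, hd2, hd3, hd4⟩ := dd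
    obtain ⟨e, he1, he2, he3⟩ := ee
    refine ⟨(d, e), hd3, ?_, ?_, hd4, he3⟩
    · simp only; omega
    · simp only; omega
  left_inv := by
    rintro ⟨⟨d, e⟩, hnd, hsum, hcard, hd, he⟩
    rfl
  right_inv := by
    rintro ⟨⟨⟨k, l⟩, hx⟩, ⟨d, hd1, hd2, hd3, hd4⟩, ⟨e, he1, he2, he3⟩⟩
    obtain rfl : k = e.sum := he1.symm
    obtain rfl : l = Multiset.card e := he2.symm
    rfl

lemma Qstar_eq (n m p : ℕ) : Qstar n m p = Nat.card (MQle n m p) := Qstar_eq' n m p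

theorem stmt_1 (n m p : ℕ) :
    P (n + m) m (p + 1) = ∑ k ∈ Finset.range (n / 2 + 1), ∑ l ∈ Finset.range (m / 2 + 1),
      Qstar (n - 2 * k) (m - 2 * l) p * P k l p := by
  rw [P_eq_s1, Nat.card_congr ((E1 n m p).trans ((E2 n m p).trans (E3 n m p))), nat_card_sigma,
    Finset.sum_coe_sort (Finset.range (n / 2 + 1) ×ˢ Finset.range (m / 2 + 1))
      (fun y => Nat.card (MQle (n - 2 * y.1) (m - 2 * y.2) p × MP y.1 y.2 p)),
    Finset.sum_product]
  refine Finset.sum_congr rfl fun k _ => Finset.sum_congr rfl fun l _ => ?_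
  rw [Nat.card_prod, ← Qstar_eq, ← P_eq_s1]
end

section
/- For all nonnegative integers n and p: P(n+p, p) = Σ_{k=0}^{⌊n/2⌋} Q_most(n−2k, p) · P(p+k, p), where P(a,b) is the number of partitions of a into exactly b parts and Q_most(a,p) is the number of partitions of a into distinct parts each at most p. -/
open Multiset Finset

theorem mcard_le_sum (s : Multiset ℕ) (h : ∀ i ∈ s, 0 < i) : s.card ≤ s.sum := by
  calc s.card = (s.map (fun _ => 1)).sum := by simp
  _ ≤ (s.map id).sum := Multiset.sum_map_le_sum_map _ _ fun i hi => h i hi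
  _ = s.sum := by simp

theorem sum_map_pred (s : Multiset ℕ) (h : ∀ i ∈ s, 0 < i) :
    (s.map (· - 1)).sum + s.card = s.sum := by
  have h1 : ((s.map (· - 1)).map (· + 1)) = s := by
    rw [Multiset.map_map]
    rw [Multiset.map_congr rfl (fun a ha => show ((· + 1) ∘ (· - 1)) a = id a by
      have := h a ha; simp only [Function.comp_apply, id_eq]; omega), Multiset.map_id]
  have h2 : ((s.map (· - 1)).map (· + 1)).sum = (s.map (· - 1)).sum + (s.map (· - 1)).card := by
    simp [Multiset.sum_map_add]
  rw [h1, Multiset.card_map] at h2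
  omega

/-- `P2 n m` : number of integer partitions of `n` into exactly `m` parts. -/
def P2 (n m : ℕ) : ℕ :=
  Fintype.card {π : n.Partition // π.parts.card = m}

/-- `Qmost n p` : number of integer partitions of `n` into distinct parts
with each part at most `p`. -/
def Qmost (n p : ℕ) : ℕ :=
  Fintype.card {π : n.Partition // π.parts.Nodup ∧ ∀ i ∈ π.parts, i ≤ p}

/-- number of partitions of `n` with all parts at most `p`. -/
def A (n p : ℕ) : ℕ :=
  Fintype.card {π : n.Partition // ∀ i ∈ π.parts, i ≤ p}

theorem card_split_s2 {α} [Fintype α] (P C : α → Prop) [DecidablePred P] [DecidablePred C] :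
    Fintype.card {x // P x} =
      Fintype.card {x // P x ∧ C x} + Fintype.card {x // P x ∧ ¬ C x} := by
  simp only [Fintype.card_subtype]
  rw [← Finset.filter_filter, ← Finset.filter_filter,
    Finset.card_filter_add_card_filter_not]

theorem P2_zero (n : ℕ) : P2 n 0 = if n = 0 then 1 else 0 := by
  unfold P2
  split
  · subst ‹n = 0›
    rw [Fintype.card_eq_one_iff]
    exact ⟨⟨default, by simp⟩, fun y => Subtype.ext (Subsingleton.elim _ _)⟩
  · rw [Fintype.card_eq_zero_iff]
    constructor
    rintro ⟨π, hπ⟩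
    have h0 : π.parts = 0 := Multiset.card_eq_zero.mp hπ
    have := π.parts_sum
    rw [h0] at this
    simp at this
    omega

theorem A_zero (n : ℕ) : A n 0 = if n = 0 then 1 else 0 := by
  unfold A
  split
  · subst ‹n = 0›
    rw [Fintype.card_eq_one_iff]
    exact ⟨⟨default, by simp⟩, fun y => Subtype.ext (Subsingleton.elim _ _)⟩
  · rw [Fintype.card_eq_zero_iff]
    constructor
    rintro ⟨π, hπ⟩
    have h0 : π.parts = 0 := Multiset.eq_zero_of_forall_notMem fun i hi =>
      absurd (hπ i hi) (Nat.not_le.mpr (π.parts_pos hi))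
    have := π.parts_sum
    rw [h0] at this
    simp at this
    omega

theorem P2_eq_zero {n m : ℕ} (h : n < m) : P2 n m = 0 := by
  unfold P2
  rw [Fintype.card_eq_zero_iff]
  constructor
  rintro ⟨π, hπ⟩
  have := mcard_le_sum π.parts fun i hi => π.parts_pos hi
  rw [hπ, π.parts_sum] at this
  omega

/-- erase one copy of a part `c` from partitions of `m + c`, transporting a predicate. -/
def eraseEquiv (c m : ℕ) (hc : 0 < c) (P Q : Multiset ℕ → Prop)
    (hPQ : ∀ s, P (c ::ₘ s) ↔ Q s) :
    {π : (m + c).Partition // P π.parts ∧ c ∈ π.parts} ≃ {π : m.Partition // Q π.parts} where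
  toFun π := ⟨⟨π.1.parts.erase c,
    fun hi => π.1.parts_pos (Multiset.mem_of_mem_erase hi),
    by
      have h1 := Multiset.cons_erase π.2.2
      have h2 := π.1.parts_sum
      rw [← h1, Multiset.sum_cons] at h2
      omega⟩,
    by
      rw [← hPQ]
      rw [Multiset.cons_erase π.2.2]
      exact π.2.1⟩
  invFun π := ⟨⟨c ::ₘ π.1.parts,
    fun hi => by
      rcases Multiset.mem_cons.mp hi with h | h
      · omega
      · exact π.1.parts_pos h,
    by rw [Multiset.sum_cons, π.1.parts_sum, Nat.add_comm]⟩,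
    ⟨(hPQ _).mpr π.2, Multiset.mem_cons_self _ _⟩⟩
  left_inv π := by
    apply Subtype.ext
    apply Nat.Partition.ext
    exact Multiset.cons_erase π.2.2
  right_inv π := by
    apply Subtype.ext
    apply Nat.Partition.ext
    exact Multiset.erase_cons_head _ _

/-- subtract 1 from every part. -/
def predEquiv (n m : ℕ) :
    {π : (n + m).Partition // π.parts.card = m ∧ 1 ∉ π.parts} ≃
      {π : n.Partition // π.parts.card = m} where
  toFun π := ⟨⟨π.1.parts.map (· - 1),
    fun hi => by
      rw [Multiset.mem_map] at hi
      obtain ⟨a, ha, rfl⟩ := hi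
      have h1 := π.1.parts_pos ha
      have h2 : a ≠ 1 := fun h => π.2.2 (h ▸ ha)
      omega,
    by
      have := sum_map_pred π.1.parts (fun i hi => π.1.parts_pos hi)
      rw [π.1.parts_sum, π.2.1] at this
      omega⟩,
    by simp [π.2.1]⟩
  invFun π := ⟨⟨π.1.parts.map (· + 1),
    fun hi => by
      rw [Multiset.mem_map] at hi
      obtain ⟨a, ha, rfl⟩ := hi
      omega,
    by
      rw [Multiset.sum_map_add]
      simp [π.1.parts_sum, π.2]⟩,
    by simp [π.2], by
      rw [Multiset.mem_map]
      rintro ⟨a, ha, h⟩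
      have := π.1.parts_pos ha
      omega⟩
  left_inv π := by
    apply Subtype.ext
    apply Nat.Partition.ext
    show (π.1.parts.map (· - 1)).map (· + 1) = π.1.parts
    rw [Multiset.map_map]
    rw [Multiset.map_congr rfl (fun a ha => show ((· + 1) ∘ (· - 1)) a = id a by
      have h1 := π.1.parts_pos ha
      have h2 : a ≠ 1 := fun h => π.2.2 (h ▸ ha)
      simp only [Function.comp_apply, id_eq]; omega), Multiset.map_id]
  right_inv π := by
    apply Subtype.ext
    apply Nat.Partition.ext
    show (π.1.parts.map (· + 1)).map (· - 1) = π.1.parts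
    rw [Multiset.map_map]
    rw [Multiset.map_congr rfl (fun a _ => show ((· - 1) ∘ (· + 1)) a = id a by
      simp), Multiset.map_id]

theorem R1 (n q : ℕ) : P2 (n + q + 1) (q + 1) = P2 (n + q) q + P2 n (q + 1) := by
  unfold P2
  rw [card_split_s2 (fun π : (n + q + 1).Partition => π.parts.card = q + 1)
    (fun π => 1 ∈ π.parts)]
  congr 1
  · exact Fintype.card_congr (eraseEquiv 1 (n + q) Nat.one_pos
      (fun s => s.card = q + 1) (fun s => s.card = q) (fun s => by simp))
  · exact Fintype.card_congr (predEquiv n (q + 1))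

theorem R2a (m q : ℕ) : A (m + (q + 1)) (q + 1) = A (m + (q + 1)) q + A m (q + 1) := by
  unfold A
  rw [card_split_s2 (fun π : (m + (q + 1)).Partition => ∀ i ∈ π.parts, i ≤ q + 1)
    (fun π => (q + 1) ∈ π.parts), Nat.add_comm]
  congr 1
  · apply Fintype.card_congr
    apply Equiv.subtypeEquivRight
    intro π
    constructor
    · rintro ⟨h1, h2⟩ i hi
      have := h1 i hi
      have : i ≠ q + 1 := fun h => h2 (h ▸ hi)
      omega
    · intro h
      refine ⟨fun i hi => by have := h i hi; omega, fun hm => by have := h _ hm; omega⟩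
  · exact Fintype.card_congr (eraseEquiv (q + 1) m (Nat.succ_pos q)
      (fun s => ∀ i ∈ s, i ≤ q + 1) (fun s => ∀ i ∈ s, i ≤ q + 1)
      (fun s => by
        constructor
        · intro h i hi
          exact h i (Multiset.mem_cons_of_mem hi)
        · intro h i hi
          rcases Multiset.mem_cons.mp hi with h' | h'
          · omega
          · exact h i h'))

theorem R2b {n q : ℕ} (h : n ≤ q) : A n (q + 1) = A n q := by
  unfold A
  apply Fintype.card_congr
  apply Equiv.subtypeEquivRight
  intro π
  constructor
  · intro _ i hi
    have h1 : i ≤ π.parts.sum := Multiset.le_sum_of_mem hi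
    rw [π.parts_sum] at h1
    omega
  · intro h' i hi
    have := h' i hi
    omega

theorem L1 (n p : ℕ) : P2 (n + p) p = A n p := by
  suffices H : ∀ N n p : ℕ, n + p = N → P2 (n + p) p = A n p from H (n + p) n p rfl
  intro N
  induction N using Nat.strong_induction_on with
  | _ N ih =>
    intro n p hN
    match p with
    | 0 => simp [P2_zero, A_zero]
    | q + 1 =>
      have e1 : n + (q + 1) = n + q + 1 := rfl
      rw [e1, R1]
      have h1 : P2 (n + q) q = A n q := ih (n + q) (by omega) n q rfl
      rcases le_or_gt n q with hle | hlt
      · rw [h1, P2_eq_zero (by omega), R2b hle]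
        omega
      · obtain ⟨m, rfl⟩ : ∃ m, n = m + (q + 1) := ⟨n - (q + 1), by omega⟩
        have h2 : P2 (m + (q + 1)) (q + 1) = A m (q + 1) := ih (m + (q + 1)) (by omega) m (q + 1) rfl
        rw [h1, h2, R2a m q]

/-- the "half" multiset: each element with multiplicity `count / 2`. -/
def nuM (s : Multiset ℕ) : Multiset ℕ :=
  ∑ a ∈ s.toFinset, Multiset.replicate (s.count a / 2) a

/-- the elements occurring with odd multiplicity, each once. -/
def sigM (s : Multiset ℕ) : Multiset ℕ :=
  s.dedup.filter (fun a => ¬ Even (s.count a))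

theorem count_nuM (s : Multiset ℕ) (b : ℕ) : (nuM s).count b = s.count b / 2 := by
  unfold nuM
  rw [Multiset.count_sum']
  rw [Finset.sum_congr rfl (fun a _ => Multiset.count_replicate b a _)]
  rw [Finset.sum_ite_eq']
  split
  · rfl
  · rw [Multiset.count_eq_zero_of_notMem (by simpa using ‹b ∉ s.toFinset›)]
    simp

theorem count_sigM (s : Multiset ℕ) (b : ℕ) :
    (sigM s).count b = if Even (s.count b) then 0 else 1 := by
  unfold sigM
  rw [Multiset.count_filter]
  by_cases hb : b ∈ s
  · rw [Multiset.count_dedup, if_pos hb]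
    split <;> simp_all
  · rw [Multiset.count_eq_zero_of_notMem hb]
    rw [Multiset.count_dedup, if_neg hb]
    simp

theorem nodup_sigM (s : Multiset ℕ) : (sigM s).Nodup :=
  (Multiset.nodup_dedup s).filter _

theorem mem_nuM {s : Multiset ℕ} {b : ℕ} (h : b ∈ nuM s) : b ∈ s := by
  rw [← Multiset.count_pos] at h ⊢
  rw [count_nuM] at h
  omega

theorem mem_sigM {s : Multiset ℕ} {b : ℕ} (h : b ∈ sigM s) : b ∈ s := by
  rw [← Multiset.count_pos] at h ⊢
  rw [count_sigM] at h
  split at h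
  · omega
  · rw [Nat.even_iff] at *
    omega

theorem decompM (s : Multiset ℕ) : sigM s + (nuM s + nuM s) = s := by
  ext b
  rw [Multiset.count_add, Multiset.count_add, count_nuM, count_sigM]
  rcases Nat.even_or_odd (s.count b) with h | h
  · rw [if_pos h]
    obtain ⟨c, hc⟩ := h
    omega
  · rw [if_neg (Nat.not_even_iff_odd.symm.mp h)]
    obtain ⟨c, hc⟩ := h
    omega

theorem sigM_recon {σ ν : Multiset ℕ} (hσ : σ.Nodup) : sigM (σ + (ν + ν)) = σ := by
  ext b
  rw [count_sigM]
  simp only [Multiset.count_add]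
  have hε := Multiset.nodup_iff_count_le_one.mp hσ b
  rcases Nat.le_one_iff_eq_zero_or_eq_one.mp hε with h | h <;>
    rw [h] <;> simp [parity_simps]

theorem nuM_recon {σ ν : Multiset ℕ} (hσ : σ.Nodup) : nuM (σ + (ν + ν)) = ν := by
  ext b
  rw [count_nuM]
  simp only [Multiset.count_add]
  have hε := Multiset.nodup_iff_count_le_one.mp hσ b
  omega

theorem sum_decompM (s : Multiset ℕ) : (sigM s).sum + 2 * (nuM s).sum = s.sum := by
  conv_rhs => rw [← decompM s]
  rw [Multiset.sum_add, Multiset.sum_add]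
  ring

theorem L2k (n p k : ℕ) (hk : 2 * k ≤ n) :
    ((univ.filter (fun π : n.Partition => ∀ i ∈ π.parts, i ≤ p)).filter
      (fun π => (nuM π.parts).sum = k)).card
    = Qmost (n - 2 * k) p * A k p := by
  rw [Qmost, A, Fintype.card_subtype, Fintype.card_subtype, ← Finset.card_product]
  refine Finset.card_bij'
    (fun π hπ =>
      ((⟨sigM π.parts, fun hi => π.parts_pos (mem_sigM hi), by
          have h2 : (nuM π.parts).sum = k := (Finset.mem_filter.mp hπ).2
          have h3 := sum_decompM π.parts
          rw [π.parts_sum] at h3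
          omega⟩ : (n - 2 * k).Partition),
       (⟨nuM π.parts, fun hi => π.parts_pos (mem_nuM hi),
          (Finset.mem_filter.mp hπ).2⟩ : k.Partition)))
    (fun b hb =>
      ⟨b.1.parts + (b.2.parts + b.2.parts),
       fun hi => by
         rcases Multiset.mem_add.mp hi with h | h
         · exact b.1.parts_pos h
         · rcases Multiset.mem_add.mp h with h' | h' <;> exact b.2.parts_pos h',
       by rw [Multiset.sum_add, Multiset.sum_add, b.1.parts_sum, b.2.parts_sum]; omega⟩)
    ?hi ?hj ?left ?right
  case hi =>
    intro π hπ
    have h1 : ∀ i ∈ π.parts, i ≤ p :=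
      (Finset.mem_filter.mp (Finset.mem_filter.mp hπ).1).2
    rw [Finset.mem_product]
    constructor
    · rw [Finset.mem_filter]
      exact ⟨Finset.mem_univ _, nodup_sigM _, fun i hi => h1 i (mem_sigM hi)⟩
    · rw [Finset.mem_filter]
      exact ⟨Finset.mem_univ _, fun i hi => h1 i (mem_nuM hi)⟩
  case hj =>
    intro b hb
    rw [Finset.mem_product, Finset.mem_filter, Finset.mem_filter] at hb
    rw [Finset.mem_filter, Finset.mem_filter]
    refine ⟨⟨Finset.mem_univ _, ?_⟩, ?_⟩
    · intro i hi
      rcases Multiset.mem_add.mp hi with h | h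
      · exact hb.1.2.2 i h
      · rcases Multiset.mem_add.mp h with h' | h' <;> exact hb.2.2 i h'
    · show (nuM (b.1.parts + (b.2.parts + b.2.parts))).sum = k
      rw [nuM_recon hb.1.2.1, b.2.parts_sum]
  case left =>
    intro π hπ
    apply Nat.Partition.ext
    exact decompM π.parts
  case right =>
    intro b hb
    rw [Finset.mem_product, Finset.mem_filter] at hb
    have hnd : b.1.parts.Nodup := hb.1.2.1
    apply Prod.ext
    · apply Nat.Partition.ext
      exact sigM_recon hnd
    · apply Nat.Partition.ext
      exact nuM_recon hnd

theorem L2 (n p : ℕ) :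
    A n p = ∑ k ∈ Finset.range (n / 2 + 1), Qmost (n - 2 * k) p * A k p := by
  rw [A, Fintype.card_subtype]
  rw [Finset.card_eq_sum_card_fiberwise (f := fun π : n.Partition => (nuM π.parts).sum)
      (t := Finset.range (n / 2 + 1))
      (fun π _ => by
        rw [Finset.mem_coe, Finset.mem_range]
        show (nuM π.parts).sum < n / 2 + 1
        have h3 := sum_decompM π.parts
        rw [π.parts_sum] at h3
        omega)]
  apply Finset.sum_congr rfl
  intro k hk
  rw [Finset.mem_range] at hk
  exact L2k n p k (by omega)

theorem stmt_2 (n p : ℕ) :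
    P2 (n + p) p = ∑ k ∈ Finset.range (n / 2 + 1), Qmost (n - 2 * k) p * P2 (p + k) p := by
  rw [L1 n p, L2]
  apply Finset.sum_congr rfl
  intro k _
  rw [Nat.add_comm p k, L1 k p]
end

section
/- For every nonnegative integer n: P(n) = Σ_{k=0}^{⌊n/2⌋} Q(n−2k) · P(k). -/
/-- `P1 n` : number of integer partitions of `n`. -/
def P1 (n : ℕ) : ℕ := Fintype.card n.Partition

/-- `Q1 n` : number of integer partitions of `n` into distinct parts. -/
def Q1 (n : ℕ) : ℕ := Fintype.card {π : n.Partition // π.parts.Nodup}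

namespace Stmt3Aux

open Multiset

/-- parts with odd multiplicity, once each -/
def dpart (s : Multiset ℕ) : Multiset ℕ := (s.toFinset.filter (fun p => Odd (s.count p))).val

/-- half of the remaining multiplicities -/
def hpart (s : Multiset ℕ) : Multiset ℕ :=
  s.toFinset.val.bind (fun p => Multiset.replicate (s.count p / 2) p)

lemma count_dpart (s : Multiset ℕ) (a : ℕ) : (dpart s).count a = s.count a % 2 := by
  by_cases h : a ∈ s.toFinset ∧ Odd (s.count a)
  · have hmem : a ∈ (s.toFinset.filter (fun p => Odd (s.count p))) := Finset.mem_filter.2 h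
    have h1 : (dpart s).count a = 1 :=
      Multiset.count_eq_one_of_mem (Finset.nodup _) hmem
    rcases h.2 with ⟨c, hc⟩
    omega
  · have h0 : (dpart s).count a = 0 := by
      rw [Multiset.count_eq_zero]
      intro hmem
      exact h (Finset.mem_filter.1 hmem)
    rw [h0]
    by_cases ha : a ∈ s.toFinset
    · have hodd : ¬ Odd (s.count a) := fun hodd => h ⟨ha, hodd⟩
      rw [Nat.not_odd_iff] at hodd
      omega
    · have : s.count a = 0 := by
        rw [Multiset.count_eq_zero]; simpa using ha
      omega

lemma count_hpart (s : Multiset ℕ) (a : ℕ) : (hpart s).count a = s.count a / 2 := by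
  unfold hpart
  rw [Multiset.count_bind]
  have h : (Multiset.map (fun b => Multiset.count a (Multiset.replicate (s.count b / 2) b))
      s.toFinset.val).sum = ∑ b ∈ s.toFinset, if b = a then s.count b / 2 else 0 := by
    rw [Finset.sum]
    congr 1
    apply Multiset.map_congr rfl
    intro b _
    rw [Multiset.count_replicate]
  rw [h, Finset.sum_ite_eq' s.toFinset a (fun b => s.count b / 2)]
  by_cases ha : a ∈ s.toFinset
  · simp [ha]
  · have : s.count a = 0 := by rw [Multiset.count_eq_zero]; simpa using ha
    simp [ha, this]

lemma dpart_nodup (s : Multiset ℕ) : (dpart s).Nodup := Finset.nodup _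

lemma decomp (s : Multiset ℕ) : s = dpart s + hpart s + hpart s := by
  ext a
  simp only [Multiset.count_add, count_dpart, count_hpart]
  omega

lemma mem_dpart {s : Multiset ℕ} {a : ℕ} (h : a ∈ dpart s) : a ∈ s := by
  rw [← Multiset.count_pos] at h ⊢
  rw [count_dpart] at h
  omega

lemma mem_hpart {s : Multiset ℕ} {a : ℕ} (h : a ∈ hpart s) : a ∈ s := by
  rw [← Multiset.count_pos] at h ⊢
  rw [count_hpart] at h
  omega

lemma dpart_eq (d m : Multiset ℕ) (hd : d.Nodup) : dpart (d + m + m) = d := by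
  ext a
  rw [count_dpart]
  simp only [Multiset.count_add]
  have : d.count a ≤ 1 := (Multiset.nodup_iff_count_le_one.1 hd) a
  omega

lemma hpart_eq (d m : Multiset ℕ) (hd : d.Nodup) : hpart (d + m + m) = m := by
  ext a
  rw [count_hpart]
  simp only [Multiset.count_add]
  have : d.count a ≤ 1 := (Multiset.nodup_iff_count_le_one.1 hd) a
  omega

def g (n : ℕ) :
    (Σ k : Fin (n / 2 + 1), {π : (n - 2 * (k : ℕ)).Partition // π.parts.Nodup} × ((k : ℕ)).Partition)
    → n.Partition := fun ⟨⟨k, hk⟩, ⟨ν, _⟩, μ⟩ =>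
  { parts := ν.parts + μ.parts + μ.parts
    parts_pos := by
      intro i hi
      simp only [Multiset.mem_add] at hi
      rcases hi with (hi | hi) | hi
      · exact ν.parts_pos hi
      · exact μ.parts_pos hi
      · exact μ.parts_pos hi
    parts_sum := by
      simp only [Multiset.sum_add, ν.parts_sum, μ.parts_sum]
      have hk' : k ≤ n / 2 := Nat.lt_succ_iff.mp hk
      omega }

lemma g_bij (n : ℕ) : Function.Bijective (g n) := by
  constructor
  · rintro ⟨⟨k₁, hk₁⟩, ⟨ν₁, hν₁⟩, μ₁⟩ ⟨⟨k₂, hk₂⟩, ⟨ν₂, hν₂⟩, μ₂⟩ h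
    have hparts : ν₁.parts + μ₁.parts + μ₁.parts = ν₂.parts + μ₂.parts + μ₂.parts :=
      congrArg Nat.Partition.parts h
    have hd : ν₁.parts = ν₂.parts := by
      have := congrArg dpart hparts
      rwa [dpart_eq _ _ hν₁, dpart_eq _ _ hν₂] at this
    have hm : μ₁.parts = μ₂.parts := by
      have := congrArg hpart hparts
      rwa [hpart_eq _ _ hν₁, hpart_eq _ _ hν₂] at this
    have hkk : k₁ = k₂ := by
      have h1 : μ₁.parts.sum = k₁ := μ₁.parts_sum
      have h2 : μ₂.parts.sum = k₂ := μ₂.parts_sum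
      rw [hm] at h1
      omega
    subst hkk
    have hμ : μ₁ = μ₂ := Nat.Partition.ext hm
    have hν : ν₁ = ν₂ := Nat.Partition.ext hd
    subst hμ; subst hν
    rfl
  · intro p
    have hs := congrArg Multiset.sum (decomp p.parts)
    rw [p.parts_sum] at hs
    simp only [Multiset.sum_add] at hs
    have hk : (hpart p.parts).sum < n / 2 + 1 := by omega
    have hsum2 : (dpart p.parts).sum = n - 2 * (hpart p.parts).sum := by omega
    refine ⟨⟨⟨(hpart p.parts).sum, hk⟩,
      ⟨⟨⟨dpart p.parts, fun {i} hi => p.parts_pos (mem_dpart hi), hsum2⟩, dpart_nodup _⟩,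
        ⟨hpart p.parts, fun {i} hi => p.parts_pos (mem_hpart hi), rfl⟩⟩⟩, ?_⟩
    apply Nat.Partition.ext
    exact (decomp p.parts).symm

end Stmt3Aux

theorem stmt_3 (n : ℕ) :
    P1 n = ∑ k ∈ Finset.range (n / 2 + 1), Q1 (n - 2 * k) * P1 k := by
  have hcard := Fintype.card_of_bijective (Stmt3Aux.g_bij n)
  rw [Fintype.card_sigma] at hcard
  simp only [Fintype.card_prod] at hcard
  rw [P1, ← hcard, ← Fin.sum_univ_eq_sum_range (fun k => Q1 (n - 2 * k) * P1 k)]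
  rfl
end

section
/- For every nonnegative integer n: Q(n) = Σ_{k=0}^{⌊n/2⌋} Σ_{l=0}^{⌊n/2⌋} (−1)^l · P(n−2k) · Q(k,l), where Q(k,l) is the number of partitions of k into exactly l distinct parts. -/
open Finset
open scoped symmDiff


/-- `Q2 n m` : number of integer partitions of `n` into exactly `m` distinct parts. -/
def Q2 (n m : ℕ) : ℕ :=
  Fintype.card {π : n.Partition // π.parts.card = m ∧ π.parts.Nodup}

/-- Distinct partitions of `k`, encoded as finsets of positive naturals summing to `k`. -/
def DSet (k : ℕ) : Finset (Finset ℕ) :=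
  ((Finset.range (k+1)).powerset).filter (fun F => 0 ∉ F ∧ F.sum id = k)

lemma mem_DSet {k : ℕ} {F : Finset ℕ} : F ∈ DSet k ↔ 0 ∉ F ∧ F.sum id = k := by
  constructor
  · intro h; exact (Finset.mem_filter.1 h).2
  · intro h
    refine Finset.mem_filter.2 ⟨Finset.mem_powerset.2 (fun a ha => ?_), h⟩
    have : a ≤ F.sum id := Finset.single_le_sum (f := id) (fun i _ => Nat.zero_le i) ha
    rw [h.2] at this
    exact Finset.mem_range.2 (Nat.lt_succ_of_le this)

lemma DSet_sum_val {F : Finset ℕ} : F.sum id = F.val.sum := by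
  rw [Finset.sum, Multiset.map_id]

/-- the partition attached to `F ∈ DSet k` -/
def toPart {k : ℕ} (F : Finset ℕ) (hF : F ∈ DSet k) : Nat.Partition k where
  parts := F.val
  parts_pos := fun hi => Nat.pos_of_ne_zero (fun h => (mem_DSet.1 hF).1 (h ▸ hi))
  parts_sum := by rw [← DSet_sum_val, (mem_DSet.1 hF).2]

lemma toFinset_mem_DSet {k : ℕ} (π : Nat.Partition k) (hπ : π.parts.Nodup) :
    π.parts.toFinset ∈ DSet k := by
  rw [mem_DSet]
  constructor
  · intro h
    exact absurd (π.parts_pos (Multiset.mem_toFinset.1 h)) (lt_irrefl 0)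
  · rw [DSet_sum_val, Multiset.toFinset_val, Multiset.Nodup.dedup hπ, π.parts_sum]

lemma card_DSet (k : ℕ) : (DSet k).card = Q1 k := by
  rw [Q1, Fintype.card_subtype]
  refine Finset.card_bij' (fun F hF => toPart F hF) (fun π hπ => π.parts.toFinset)
    ?_ ?_ ?_ ?_
  · intro F hF
    simp only [Finset.mem_filter, Finset.mem_univ, true_and]
    exact F.nodup
  · intro π hπ
    exact toFinset_mem_DSet π (by simpa using hπ)
  · intro F hF
    ext a
    simp [toPart, Multiset.mem_toFinset]
  · intro π hπ
    ext1
    simp only [toPart]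
    rw [Multiset.toFinset_val, Multiset.Nodup.dedup (by simpa using hπ)]

lemma card_DSet_filter (k l : ℕ) :
    ((DSet k).filter (fun F => F.card = l)).card = Q2 k l := by
  rw [Q2, Fintype.card_subtype]
  refine Finset.card_bij' (fun F hF => toPart F (Finset.mem_filter.1 hF).1)
    (fun π hπ => π.parts.toFinset) ?_ ?_ ?_ ?_
  · intro F hF
    simp only [Finset.mem_filter, Finset.mem_univ, true_and]
    exact ⟨(Finset.mem_filter.1 hF).2, F.nodup⟩
  · intro π hπ
    simp only [Finset.mem_filter, Finset.mem_univ, true_and] at hπ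
    refine Finset.mem_filter.2 ⟨toFinset_mem_DSet π hπ.2, ?_⟩
    rw [Finset.card_def, Multiset.toFinset_val, Multiset.Nodup.dedup hπ.2, hπ.1]
  · intro F hF
    ext a
    simp [toPart, Multiset.mem_toFinset]
  · intro π hπ
    simp only [Finset.mem_filter, Finset.mem_univ, true_and] at hπ
    ext1
    simp only [toPart]
    rw [Multiset.toFinset_val, Multiset.Nodup.dedup hπ.2]

/-- Partitions of `j`, encoded as multisets. -/
def MSet (j : ℕ) : Finset (Multiset ℕ) :=
  Finset.univ.image (fun π : Nat.Partition j => π.parts)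

lemma mem_MSet {j : ℕ} {M : Multiset ℕ} :
    M ∈ MSet j ↔ (∀ i ∈ M, 0 < i) ∧ M.sum = j := by
  constructor
  · rintro h
    obtain ⟨π, -, rfl⟩ := Finset.mem_image.1 h
    exact ⟨fun i hi => π.parts_pos hi, π.parts_sum⟩
  · rintro ⟨h1, h2⟩
    exact Finset.mem_image.2 ⟨⟨M, fun hi => h1 _ hi, h2⟩, Finset.mem_univ _, rfl⟩

lemma card_MSet (j : ℕ) : (MSet j).card = P1 j := by
  rw [MSet, Finset.card_image_of_injective _ (fun a b h => Nat.Partition.ext h),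
    Finset.card_univ, P1]

lemma msup_mem (M : Multiset ℕ) (h : M ≠ 0) : M.sup ∈ M := by
  induction M using Multiset.induction_on with
  | empty => exact absurd rfl h
  | cons a S ih =>
    rw [Multiset.sup_cons]
    rcases eq_or_ne S 0 with rfl | hS
    · simp
    · rcases le_total a S.sup with h1 | h1
      · rw [sup_eq_right.2 h1]
        exact Multiset.mem_cons_of_mem (ih hS)
      · rw [sup_eq_left.2 h1]
        exact Multiset.mem_cons_self _ _

lemma fsup_mem {F : Finset ℕ} (h : F ≠ ∅) : F.val.sup ∈ F :=
  msup_mem F.val (by rwa [Ne, Finset.val_eq_zero])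

lemma le_fsup {F : Finset ℕ} {a : ℕ} (h : a ∈ F) : a ≤ F.val.sup :=
  Multiset.le_sup (Finset.mem_def.1 h)


def SA (m : ℕ) : Finset (Finset ℕ × Multiset ℕ) :=
  (Finset.range (m+1)).biUnion (fun k => DSet k ×ˢ MSet (m - k))

lemma mem_SA {m : ℕ} {x : Finset ℕ × Multiset ℕ} :
    x ∈ SA m ↔ 0 ∉ x.1 ∧ (∀ i ∈ x.2, 0 < i) ∧ x.1.sum id + x.2.sum = m := by
  simp only [SA, Finset.mem_biUnion, Finset.mem_range, Finset.mem_product, mem_DSet, mem_MSet]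
  constructor
  · rintro ⟨k, hk, ⟨h1, h2⟩, h3, h4⟩
    exact ⟨h1, h3, by omega⟩
  · rintro ⟨h1, h2, h3⟩
    exact ⟨x.1.sum id, by omega, ⟨h1, rfl⟩, h2, by omega⟩

-- facts in the case `M.sup ≤ F.val.sup` (move `b = F.val.sup` from `F` to `M`)
lemma caseF {m : ℕ} {F : Finset ℕ} {M : Multiset ℕ} (hm : m ≠ 0) (h1 : 0 ∉ F)
    (h2 : ∀ i ∈ M, 0 < i) (h3 : F.sum id + M.sum = m) (hab : M.sup ≤ F.val.sup) :
    F.val.sup ∈ F ∧ 0 < F.val.sup := by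
  have hFne : F ≠ ∅ := by
    rintro rfl
    have hab0 : M.sup = 0 := by simpa using hab
    rcases eq_or_ne M 0 with rfl | hM
    · simp only [Finset.sum_empty, Multiset.sum_zero, Nat.add_zero] at h3
      exact hm h3.symm
    · have := h2 _ (msup_mem M hM); omega
  have hbF : F.val.sup ∈ F := fsup_mem hFne
  exact ⟨hbF, Nat.pos_of_ne_zero (fun h => h1 (h ▸ hbF))⟩

-- facts in the case `¬ M.sup ≤ F.val.sup` (move `a = M.sup` from `M` to `F`)
lemma caseM {F : Finset ℕ} {M : Multiset ℕ}
    (h2 : ∀ i ∈ M, 0 < i) (hab : ¬ M.sup ≤ F.val.sup) :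
    M.sup ∈ M ∧ 0 < M.sup ∧ M.sup ∉ F := by
  have hMne : M ≠ 0 := by rintro rfl; simp at hab
  have haM : M.sup ∈ M := msup_mem M hMne
  exact ⟨haM, h2 _ haM, fun h => hab (le_fsup h)⟩

lemma claimA {m : ℕ} (hm : m ≠ 0) : ∑ x ∈ SA m, (-1 : ℤ) ^ x.1.card = 0 := by
  have g_mem : ∀ x ∈ SA m, (if x.2.sup ≤ x.1.val.sup
      then (x.1.erase (x.1.val.sup), (x.1.val.sup) ::ₘ x.2)
      else (insert (x.2.sup) x.1, x.2.erase (x.2.sup))) ∈ SA m := by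
    rintro ⟨F, M⟩ hx
    obtain ⟨h1, h2, h3⟩ := mem_SA.1 hx
    dsimp only at *
    split_ifs with hab
    · obtain ⟨hbF, hbpos⟩ := caseF hm h1 h2 h3 hab
      refine mem_SA.2 ⟨fun h => h1 (Finset.mem_of_mem_erase h), ?_, ?_⟩
      · intro i hi
        rcases Multiset.mem_cons.1 hi with rfl | hi
        · exact hbpos
        · exact h2 _ hi
      · have hsum := Finset.sum_erase_add F id hbF
        rw [Multiset.sum_cons]
        simp only [id_eq] at hsum h3 ⊢
        omega
    · obtain ⟨haM, hapos, haF⟩ := caseM h2 hab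
      refine mem_SA.2 ⟨?_, fun i hi => h2 _ (Multiset.mem_of_mem_erase hi), ?_⟩
      · intro h
        rcases Finset.mem_insert.1 h with h | h
        · omega
        · exact h1 h
      · have hsum : M.sup + (M.erase M.sup).sum = M.sum := by
          rw [← Multiset.sum_cons, Multiset.cons_erase haM]
        rw [Finset.sum_insert haF]
        simp only [id_eq] at h3 ⊢
        omega
  apply Finset.sum_involution (g := fun x _ => if x.2.sup ≤ x.1.val.sup
      then (x.1.erase (x.1.val.sup), (x.1.val.sup) ::ₘ x.2)
      else (insert (x.2.sup) x.1, x.2.erase (x.2.sup))) (g_mem := g_mem)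
  case hg₁ =>
    rintro ⟨F, M⟩ hx
    obtain ⟨h1, h2, h3⟩ := mem_SA.1 hx
    dsimp only at *
    split_ifs with hab
    · obtain ⟨hbF, hbpos⟩ := caseF hm h1 h2 h3 hab
      rw [← Finset.card_erase_add_one hbF]
      ring
    · obtain ⟨haM, hapos, haF⟩ := caseM h2 hab
      rw [Finset.card_insert_of_notMem haF]
      ring
  case hg₃ =>
    rintro ⟨F, M⟩ hx -
    obtain ⟨h1, h2, h3⟩ := mem_SA.1 hx
    dsimp only at *
    split_ifs with hab
    · obtain ⟨hbF, hbpos⟩ := caseF hm h1 h2 h3 hab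
      intro h
      have hc := congrArg (fun y => (Prod.fst y).card) h
      simp only at hc
      rw [Finset.card_erase_of_mem hbF] at hc
      have : F.card ≠ 0 := Finset.card_ne_zero_of_mem hbF
      omega
    · obtain ⟨haM, hapos, haF⟩ := caseM h2 hab
      intro h
      have hc := congrArg (fun y => (Prod.fst y).card) h
      simp only at hc
      rw [Finset.card_insert_of_notMem haF] at hc
      omega
  case hg₄ =>
    rintro ⟨F, M⟩ hx
    obtain ⟨h1, h2, h3⟩ := mem_SA.1 hx
    by_cases hab : M.sup ≤ F.val.sup
    · obtain ⟨hbF, hbpos⟩ := caseF hm h1 h2 h3 hab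
      rw [if_pos hab]
      dsimp only
      have hsup' : (F.val.sup ::ₘ M).sup = F.val.sup := by
        rw [Multiset.sup_cons, sup_eq_left.2 hab]
      have hlt : (F.erase F.val.sup).val.sup < F.val.sup := by
        rcases eq_or_ne (F.erase F.val.sup) ∅ with he | he
        · rw [he]; simpa using hbpos
        · have hmem : (F.erase F.val.sup).val.sup ∈ F.erase F.val.sup := fsup_mem he
          have h5 := Finset.mem_of_mem_erase hmem
          have h6 := Finset.ne_of_mem_erase hmem
          have h7 := le_fsup h5
          omega
      rw [if_neg (by rw [hsup']; omega), hsup', Multiset.erase_cons_head,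
        Finset.insert_erase hbF]
    · obtain ⟨haM, hapos, haF⟩ := caseM h2 hab
      rw [if_neg hab]
      dsimp only
      have hsupF : (insert M.sup F).val.sup = M.sup := by
        apply le_antisymm
        · rw [Multiset.sup_le]
          intro b hb
          rcases Finset.mem_insert.1 (Finset.mem_def.2 hb) with rfl | hb
          · exact le_rfl
          · exact le_trans (le_fsup hb) (le_of_lt (not_le.1 hab))
        · exact le_fsup (Finset.mem_insert_self _ _)
      have hsupM : (M.erase M.sup).sup ≤ M.sup := by
        rw [Multiset.sup_le]
        exact fun b hb => Multiset.le_sup (Multiset.mem_of_mem_erase hb)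
      rw [if_pos (by rw [hsupF]; exact hsupM), hsupF, Finset.erase_insert haF,
        Multiset.cons_erase haM]

def fZ (k : ℕ) : ℤ := ∑ F ∈ DSet k, (-1 : ℤ) ^ F.card

def SB (n : ℕ) : Finset (Finset ℕ × Finset ℕ) :=
  (Finset.range (n+1)).biUnion (fun j => DSet j ×ˢ DSet (n - j))

lemma mem_SB {n : ℕ} {x : Finset ℕ × Finset ℕ} :
    x ∈ SB n ↔ 0 ∉ x.1 ∧ 0 ∉ x.2 ∧ x.1.sum id + x.2.sum id = n := by
  simp only [SB, Finset.mem_biUnion, Finset.mem_range, Finset.mem_product, mem_DSet]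
  constructor
  · rintro ⟨j, hj, ⟨h1, h2⟩, h3, h4⟩
    exact ⟨h1, h3, by omega⟩
  · rintro ⟨h1, h2, h3⟩
    exact ⟨x.1.sum id, by omega, ⟨h1, rfl⟩, h2, by omega⟩

lemma symmDiff_move {F G : Finset ℕ} {j : ℕ} (hjF : j ∈ F) (hjG : j ∉ G) :
    (F.erase j) ∆ (insert j G) = F ∆ G := by
  ext a
  simp only [Finset.mem_symmDiff, Finset.mem_erase, Finset.mem_insert]
  by_cases h : a = j
  · subst h
    tauto
  · tauto

lemma symmDiff_move' {F G : Finset ℕ} {j : ℕ} (hjG : j ∈ G) (hjF : j ∉ F) :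
    (insert j F) ∆ (G.erase j) = F ∆ G := by
  rw [symmDiff_comm, symmDiff_move hjG hjF, symmDiff_comm]

lemma fmin_eq {s : Finset ℕ} {h : s.Nonempty} {j : ℕ} (hj : j ∈ s)
    (hle : ∀ b ∈ s, j ≤ b) : s.min' h = j :=
  le_antisymm (Finset.min'_le s j hj) (Finset.le_min' s h j hle)

noncomputable def dmin (x : Finset ℕ × Finset ℕ) : ℕ :=
  sInf {a : ℕ | a ∈ x.1 ∆ x.2}

lemma dmin_mem {F G : Finset ℕ} (h : ¬ F = G) : dmin (F, G) ∈ F ∆ G := by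
  have hne : ({a : ℕ | a ∈ (F, G).1 ∆ (F, G).2}).Nonempty := by
    rw [Set.nonempty_def]
    by_contra hc
    push_neg at hc
    apply h
    have : F ∆ G = ∅ := Finset.eq_empty_of_forall_notMem (fun a ha => hc a ha)
    exact symmDiff_eq_bot.1 this
  exact Nat.sInf_mem hne

lemma dmin_le {F G : Finset ℕ} {b : ℕ} (hb : b ∈ F ∆ G) : dmin (F, G) ≤ b :=
  Nat.sInf_le hb

lemma dmin_eq {F G : Finset ℕ} {j : ℕ} (hj : j ∈ F ∆ G) (hle : ∀ b ∈ F ∆ G, j ≤ b) :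
    dmin (F, G) = j :=
  le_antisymm (Nat.sInf_le hj) (le_csInf ⟨j, hj⟩ (fun b hb => hle b hb))

lemma dmin_symm {F G : Finset ℕ} : dmin (F, G) ∈ F ∆ G ↔ dmin (F, G) ∈ F ∆ G := Iff.rfl

lemma claimB (n : ℕ) :
    ∑ x ∈ SB n, (-1 : ℤ) ^ x.1.card = if 2 ∣ n then fZ (n / 2) else 0 := by
  classical
  rw [← Finset.sum_filter_add_sum_filter_not (SB n) (fun x => x.1 = x.2)]
  have hdiag : ∑ x ∈ (SB n).filter (fun x => x.1 = x.2), (-1 : ℤ) ^ x.1.card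
      = if 2 ∣ n then fZ (n / 2) else 0 := by
    split_ifs with hpar
    · rw [fZ]
      obtain ⟨c, rfl⟩ := hpar
      refine Finset.sum_nbij' (fun x => x.1) (fun F => (F, F)) ?_ ?_ ?_ ?_ ?_
      · rintro ⟨F, G⟩ hx
        simp only [Finset.mem_filter] at hx
        obtain ⟨hmem, rfl⟩ := hx
        obtain ⟨h1, h2, h3⟩ := mem_SB.1 hmem
        dsimp only at h3 ⊢
        exact mem_DSet.2 ⟨h1, by omega⟩
      · intro F hF
        obtain ⟨h1, h2⟩ := mem_DSet.1 hF
        refine Finset.mem_filter.2 ⟨mem_SB.2 ⟨h1, h1, by dsimp only; omega⟩, rfl⟩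
      · rintro ⟨F, G⟩ hx
        simp only [Finset.mem_filter] at hx
        simp [hx.2]
      · intro F hF; rfl
      · rintro ⟨F, G⟩ hx; rfl
    · apply Finset.sum_eq_zero
      rintro ⟨F, G⟩ hx
      simp only [Finset.mem_filter] at hx
      obtain ⟨hmem, heq⟩ := hx
      obtain ⟨h1, h2, h3⟩ := mem_SB.1 hmem
      subst heq
      dsimp only at h3
      exact absurd ⟨F.sum id, by omega⟩ hpar
  have hoff : ∑ x ∈ (SB n).filter (fun x => ¬ x.1 = x.2), (-1 : ℤ) ^ x.1.card = 0 := by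
    apply Finset.sum_involution (g := fun x _ =>
      if dmin x ∈ x.1
      then (x.1.erase (dmin x), insert (dmin x) x.2)
      else (insert (dmin x) x.1, x.2.erase (dmin x)))
    case hg₁ =>
      rintro ⟨F, G⟩ hx
      dsimp only
      split_ifs with hmem
      · rw [← Finset.card_erase_add_one hmem]; ring
      · rw [Finset.card_insert_of_notMem hmem]; ring
    case hg₃ =>
      rintro ⟨F, G⟩ hx -
      dsimp only
      split_ifs with hmem
      · intro h
        have hc := congrArg (fun y : Finset ℕ × Finset ℕ => y.1.card) h
        dsimp only at hc
        rw [Finset.card_erase_of_mem hmem] at hc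
        have : F.card ≠ 0 := Finset.card_ne_zero_of_mem hmem
        omega
      · intro h
        have hc := congrArg (fun y : Finset ℕ × Finset ℕ => y.1.card) h
        dsimp only at hc
        rw [Finset.card_insert_of_notMem hmem] at hc
        omega
    case g_mem =>
      rintro ⟨F, G⟩ hx
      obtain ⟨hmem, hFG⟩ := Finset.mem_filter.1 hx
      obtain ⟨h1, h2, h3⟩ := mem_SB.1 hmem
      dsimp only at h1 h2 h3 hFG ⊢
      have hjD : dmin (F, G) ∈ F ∆ G := dmin_mem hFG
      set j := dmin (F, G) with hj
      have hj0 : j ≠ 0 := by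
        rcases Finset.mem_symmDiff.1 hjD with ⟨h, -⟩ | ⟨h, -⟩
        · exact fun e => h1 (e ▸ h)
        · exact fun e => h2 (e ▸ h)
      split_ifs with hmemF
      · have hjG : j ∉ G := by
          rcases Finset.mem_symmDiff.1 hjD with ⟨-, h⟩ | ⟨-, h⟩
          · exact h
          · exact absurd hmemF h
        refine Finset.mem_filter.2 ⟨mem_SB.2 ⟨fun h => h1 (Finset.mem_of_mem_erase h), ?_, ?_⟩, ?_⟩
        · intro h
          rcases Finset.mem_insert.1 h with h | h
          · exact hj0 h.symm
          · exact h2 h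
        · have hs1 := Finset.sum_erase_add F id hmemF
          dsimp only
          rw [Finset.sum_insert hjG]
          simp only [id_eq] at hs1 h3 ⊢
          omega
        · intro h
          dsimp only at h
          have : j ∈ F.erase j := by
            rw [h]; exact Finset.mem_insert_self _ _
          exact (Finset.notMem_erase _ _) this
      · have hjG : j ∈ G := by
          rcases Finset.mem_symmDiff.1 hjD with ⟨h, -⟩ | ⟨h, -⟩
          · exact absurd h hmemF
          · exact h
        refine Finset.mem_filter.2 ⟨mem_SB.2 ⟨?_, fun h => h2 (Finset.mem_of_mem_erase h), ?_⟩, ?_⟩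
        · intro h
          rcases Finset.mem_insert.1 h with h | h
          · exact hj0 h.symm
          · exact h1 h
        · have hs1 := Finset.sum_erase_add G id hjG
          dsimp only
          rw [Finset.sum_insert hmemF]
          simp only [id_eq] at hs1 h3 ⊢
          omega
        · intro h
          dsimp only at h
          have : j ∈ G.erase j := by
            rw [← h]; exact Finset.mem_insert_self _ _
          exact (Finset.notMem_erase _ _) this
    case hg₄ =>
      rintro ⟨F, G⟩ hx
      obtain ⟨hmem, hFG⟩ := Finset.mem_filter.1 hx
      obtain ⟨h1, h2, h3⟩ := mem_SB.1 hmem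
      dsimp only at h1 h2 h3 hFG
      have hjD : dmin (F, G) ∈ F ∆ G := dmin_mem hFG
      set j := dmin (F, G) with hj
      have hjmin : ∀ b ∈ F ∆ G, j ≤ b := fun b hb => dmin_le hb
      dsimp only
      by_cases hmemF : j ∈ F
      · have hjG : j ∉ G := by
          rcases Finset.mem_symmDiff.1 hjD with ⟨-, h⟩ | ⟨-, h⟩
          · exact h
          · exact absurd hmemF h
        rw [if_pos hmemF]
        have hD' : (F.erase j) ∆ (insert j G) = F ∆ G := symmDiff_move hmemF hjG
        have hmj : dmin (F.erase j, insert j G) = j :=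
          dmin_eq (hD' ▸ hjD) (fun b hb => hjmin b (hD' ▸ hb))
        dsimp only
        rw [hmj, if_neg (Finset.notMem_erase j F), Finset.insert_erase hmemF,
          Finset.erase_insert hjG]
      · have hjG : j ∈ G := by
          rcases Finset.mem_symmDiff.1 hjD with ⟨h, -⟩ | ⟨h, -⟩
          · exact absurd h hmemF
          · exact h
        rw [if_neg hmemF]
        have hD' : (insert j F) ∆ (G.erase j) = F ∆ G := symmDiff_move' hjG hmemF
        have hmj : dmin (insert j F, G.erase j) = j :=
          dmin_eq (hD' ▸ hjD) (fun b hb => hjmin b (hD' ▸ hb))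
        dsimp only
        rw [hmj, if_pos (Finset.mem_insert_self j F), Finset.erase_insert hmemF,
          Finset.insert_erase hjG]
  rw [hdiag, hoff, add_zero]


lemma DSet_zero : DSet 0 = {∅} := by
  ext F
  rw [mem_DSet]
  simp only [Finset.mem_singleton]
  constructor
  · rintro ⟨h0, hs⟩
    ext a
    simp only [Finset.notMem_empty, iff_false]
    intro ha
    have h1 : a ≤ F.sum id := Finset.single_le_sum (f := id) (fun i _ => Nat.zero_le i) ha
    rw [hs] at h1
    exact h0 (Nat.le_zero.1 h1 ▸ ha)
  · rintro rfl
    simp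

lemma fZ_zero : fZ 0 = 1 := by rw [fZ, DSet_zero]; simp

lemma P1_zero : P1 0 = 1 := by
  rw [P1]
  exact Fintype.card_unique

lemma Q1_zero : Q1 0 = 1 := by rw [← card_DSet, DSet_zero]; rfl

lemma sum_SA (m : ℕ) :
    ∑ k ∈ Finset.range (m+1), fZ k * (P1 (m-k) : ℤ) = ∑ x ∈ SA m, (-1 : ℤ) ^ x.1.card := by
  rw [SA, Finset.sum_biUnion]
  · apply Finset.sum_congr rfl
    intro k _
    rw [Finset.sum_product, fZ, Finset.sum_mul]
    apply Finset.sum_congr rfl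
    intro F _
    trans ∑ _y ∈ MSet (m-k), (-1 : ℤ)^F.card
    · rw [Finset.sum_const, nsmul_eq_mul, card_MSet, mul_comm]
    · rfl
  · intro i _ j _ hij
    simp only [Function.onFun]
    rw [Finset.disjoint_left]
    rintro ⟨F, M⟩ h1 h2
    rw [Finset.mem_product] at h1 h2
    have e1 := (mem_DSet.1 h1.1).2
    have e2 := (mem_DSet.1 h2.1).2
    exact hij (e1.symm.trans e2)

lemma convA (m : ℕ) :
    ∑ k ∈ Finset.range (m+1), fZ k * (P1 (m-k) : ℤ) = if m = 0 then 1 else 0 := by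
  rcases eq_or_ne m 0 with rfl | hm
  · simp [fZ_zero, P1_zero]
  · rw [sum_SA, claimA hm, if_neg hm]

lemma sum_SB (n : ℕ) :
    ∑ j ∈ Finset.range (n+1), fZ j * (Q1 (n-j) : ℤ) = ∑ x ∈ SB n, (-1 : ℤ) ^ x.1.card := by
  rw [SB, Finset.sum_biUnion]
  · apply Finset.sum_congr rfl
    intro k _
    rw [Finset.sum_product, fZ, Finset.sum_mul]
    apply Finset.sum_congr rfl
    intro F _
    trans ∑ _y ∈ DSet (n-k), (-1 : ℤ)^F.card
    · rw [Finset.sum_const, nsmul_eq_mul, card_DSet, mul_comm]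
    · rfl
  · intro i _ j _ hij
    simp only [Function.onFun]
    rw [Finset.disjoint_left]
    rintro ⟨F, G⟩ h1 h2
    rw [Finset.mem_product] at h1 h2
    have e1 := (mem_DSet.1 h1.1).2
    have e2 := (mem_DSet.1 h2.1).2
    exact hij (e1.symm.trans e2)

lemma convB (n : ℕ) :
    ∑ j ∈ Finset.range (n+1), fZ j * (Q1 (n-j) : ℤ) = if 2 ∣ n then fZ (n/2) else 0 := by
  rw [sum_SB, claimB]

/-- the candidate value of `Q1 n` -/
def SZ (t : ℕ) : ℤ := ∑ k ∈ Finset.range (t/2 + 1), (P1 (t - 2*k) : ℤ) * fZ k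

lemma convS (n : ℕ) :
    ∑ j ∈ Finset.range (n+1), fZ j * SZ (n-j) = if 2 ∣ n then fZ (n/2) else 0 := by
  have step1 : ∀ j ∈ Finset.range (n+1), fZ j * SZ (n-j)
      = ∑ k ∈ Finset.range (n+1), (if j + 2*k ≤ n then fZ j * ((P1 (n - j - 2*k) : ℤ) * fZ k) else 0) := by
    intro j hj
    rw [Finset.mem_range] at hj
    rw [SZ, Finset.mul_sum, ← Finset.sum_filter]
    have hr : Finset.filter (fun k => j + 2*k ≤ n) (Finset.range (n+1))
        = Finset.range ((n-j)/2 + 1) := by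
      ext k
      simp only [Finset.mem_filter, Finset.mem_range]
      omega
    rw [hr]
  rw [Finset.sum_congr rfl step1, Finset.sum_comm]
  have step2 : ∀ k ∈ Finset.range (n+1),
      ∑ j ∈ Finset.range (n+1), (if j + 2*k ≤ n then fZ j * ((P1 (n - j - 2*k) : ℤ) * fZ k) else 0)
      = (if n = 2*k then fZ k else 0) := by
    intro k _
    by_cases hk : 2*k ≤ n
    · have hr : Finset.filter (fun j => j + 2*k ≤ n) (Finset.range (n+1))
          = Finset.range ((n - 2*k) + 1) := by
        ext j
        simp only [Finset.mem_filter, Finset.mem_range]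
        omega
      rw [← Finset.sum_filter, hr]
      have : ∀ j ∈ Finset.range ((n - 2*k) + 1),
          fZ j * ((P1 (n - j - 2*k) : ℤ) * fZ k) = (fZ j * (P1 ((n - 2*k) - j) : ℤ)) * fZ k := by
        intro j hj
        have : n - j - 2*k = (n - 2*k) - j := by omega
        rw [this]; ring
      rw [Finset.sum_congr rfl this, ← Finset.sum_mul, convA]
      by_cases h0 : n - 2*k = 0
      · rw [if_pos h0, if_pos (by omega), one_mul]
      · rw [if_neg h0, if_neg (by omega), zero_mul]
    · rw [Finset.sum_eq_zero, if_neg (by omega)]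
      intro j _
      rw [if_neg (by omega)]
  rw [Finset.sum_congr rfl step2]
  by_cases hpar : 2 ∣ n
  · obtain ⟨c, rfl⟩ := hpar
    rw [if_pos ⟨c, rfl⟩]
    have : (2*c)/2 = c := by omega
    rw [this]
    rw [Finset.sum_eq_single c]
    · rw [if_pos rfl]
    · intro b _ hb
      rw [if_neg (by omega)]
    · intro hc
      exfalso
      exact hc (Finset.mem_range.2 (by omega))
  · rw [if_neg hpar]
    apply Finset.sum_eq_zero
    intro k _
    rw [if_neg (fun h => hpar ⟨k, h⟩)]

lemma mainZ : ∀ n : ℕ, (Q1 n : ℤ) = SZ n := by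
  intro n
  induction n using Nat.strong_induction_on with
  | _ n ih =>
    have key : ∑ j ∈ Finset.range (n+1), fZ j * ((Q1 (n-j) : ℤ) - SZ (n-j)) = 0 := by
      have := convB n
      have := convS n
      calc ∑ j ∈ Finset.range (n+1), fZ j * ((Q1 (n-j) : ℤ) - SZ (n-j))
          = ∑ j ∈ Finset.range (n+1), (fZ j * (Q1 (n-j) : ℤ) - fZ j * SZ (n-j)) := by
            apply Finset.sum_congr rfl; intro j _; ring
        _ = ∑ j ∈ Finset.range (n+1), fZ j * (Q1 (n-j) : ℤ)
            - ∑ j ∈ Finset.range (n+1), fZ j * SZ (n-j) := Finset.sum_sub_distrib _ _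
        _ = 0 := by rw [convB, convS]; ring
    rw [Finset.sum_range_succ'] at key
    have hrest : ∑ i ∈ Finset.range n, fZ (i+1) * ((Q1 (n-(i+1)) : ℤ) - SZ (n-(i+1))) = 0 := by
      apply Finset.sum_eq_zero
      intro i hi
      rw [Finset.mem_range] at hi
      rw [ih (n - (i+1)) (by omega)]
      ring
    rw [hrest, fZ_zero, zero_add, one_mul, Nat.sub_zero] at key
    linarith [key]

lemma fZ_expand {k m : ℕ} (hk : k ≤ m) :
    fZ k = ∑ l ∈ Finset.range (m+1), (-1 : ℤ)^l * (Q2 k l : ℤ) := by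
  rw [fZ, ← Finset.sum_fiberwise_of_maps_to (g := fun F : Finset ℕ => F.card)
    (t := Finset.range (m+1)) ?_ (fun F => (-1 : ℤ)^F.card)]
  · apply Finset.sum_congr rfl
    intro l _
    rw [← card_DSet_filter]
    rw [Finset.sum_congr rfl (fun F hF => by
      rw [(Finset.mem_filter.1 hF).2]), Finset.sum_const, nsmul_eq_mul, mul_comm]
  · intro F hF
    obtain ⟨h0, hs⟩ := mem_DSet.1 hF
    rw [Finset.mem_range]
    have : F.card • 1 ≤ F.sum id := Finset.card_nsmul_le_sum F id 1 (fun x hx =>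
      Nat.one_le_iff_ne_zero.2 (fun h => h0 (h ▸ hx)))
    simp only [smul_eq_mul, mul_one] at this
    show F.card < m + 1
    omega

theorem stmt_5 (n : ℕ) :
    (Q1 n : ℤ) = ∑ k ∈ Finset.range (n / 2 + 1), ∑ l ∈ Finset.range (n / 2 + 1),
      (-1 : ℤ) ^ l * P1 (n - 2 * k) * Q2 k l := by
  rw [mainZ n, SZ]
  apply Finset.sum_congr rfl
  intro k hk
  rw [Finset.mem_range] at hk
  rw [fZ_expand (show k ≤ n/2 by omega), Finset.mul_sum]
  apply Finset.sum_congr rfl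
  intro l _
  ring
end

section
/- For all nonnegative integers n, m, p, the following identity holds in ℝ: Σ_{k=0}^{⌊n/3⌋} Σ_{l=0}^{⌊m/3⌋} (−1)^l · Q(n−3k, m−3l, p) · P(k, l, p) = Σ_{k=0}^{n} Σ_{l=0}^{m} cos((2l−m)π/3) · P(n−k, m−l, p) · P(k, l, p). -/
lemma P_zero (n m : ℕ) : P n m 0 = if n = 0 ∧ m = 0 then 1 else 0 := by
  unfold P
  rcases Decidable.em (n = 0 ∧ m = 0) with h|h
  case inl =>
    obtain ⟨rfl, rfl⟩ := h
    rw [if_pos ⟨rfl, rfl⟩]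
    rw [Fintype.card_eq_one_iff]
    refine ⟨⟨default, by simp, by simp⟩, fun y => Subtype.ext (Subsingleton.elim _ _)⟩
  case inr =>
    rw [if_neg h, Fintype.card_eq_zero_iff]
    constructor
    rintro ⟨π, hc, hle⟩
    have hp : π.parts = 0 := by
      rw [Multiset.eq_zero_iff_forall_notMem]
      intro i hi
      exact absurd (hle i hi) (by simp [Nat.pos_iff_ne_zero.mp (π.parts_pos hi)])
    have hn : n = 0 := by rw [← π.parts_sum, hp]; simp
    have hm : m = 0 := by rw [← hc, hp]; simp
    exact h ⟨hn, hm⟩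

lemma Q_zero (n m : ℕ) : Q n m 0 = if n = 0 ∧ m = 0 then 1 else 0 := by
  unfold Q
  rcases Decidable.em (n = 0 ∧ m = 0) with h|h
  case inl =>
    obtain ⟨rfl, rfl⟩ := h
    rw [if_pos ⟨rfl, rfl⟩]
    rw [Fintype.card_eq_one_iff]
    refine ⟨⟨default, by simp, by simp, by simp⟩, fun y => Subtype.ext (Subsingleton.elim _ _)⟩
  case inr =>
    rw [if_neg h, Fintype.card_eq_zero_iff]
    constructor
    rintro ⟨π, hc, _, hle⟩
    have hp : π.parts = 0 := by
      rw [Multiset.eq_zero_iff_forall_notMem]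
      intro i hi
      exact absurd (hle i hi) (by simp [Nat.pos_iff_ne_zero.mp (π.parts_pos hi)])
    have hn : n = 0 := by rw [← π.parts_sum, hp]; simp
    have hm : m = 0 := by rw [← hc, hp]; simp
    exact h ⟨hn, hm⟩

def removePart {a : ℕ} (s : ℕ) (π : a.Partition) (h : s ∈ π.parts) : (a - s).Partition where
  parts := π.parts.erase s
  parts_pos := fun hi => π.parts_pos (Multiset.mem_of_mem_erase hi)
  parts_sum := by
    have hce := Multiset.cons_erase h
    have h2 : (s ::ₘ π.parts.erase s).sum = a := by rw [hce, π.parts_sum]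
    rw [Multiset.sum_cons] at h2
    omega

def addPart {a : ℕ} (s : ℕ) (hs : 0 < s) (hsa : s ≤ a) (σ : (a - s).Partition) : a.Partition where
  parts := s ::ₘ σ.parts
  parts_pos := by
    intro i hi
    rcases Multiset.mem_cons.mp hi with h' | h'
    · omega
    · exact σ.parts_pos h'
  parts_sum := by rw [Multiset.sum_cons, σ.parts_sum]; omega

@[simp] lemma removePart_parts {a : ℕ} (s : ℕ) (π : a.Partition) (h : s ∈ π.parts) :
    (removePart s π h).parts = π.parts.erase s := rfl

@[simp] lemma addPart_parts {a : ℕ} (s : ℕ) (hs : 0 < s) (hsa : s ≤ a) (σ : (a - s).Partition) :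
    (addPart s hs hsa σ).parts = s ::ₘ σ.parts := rfl

lemma P_rec (p a b : ℕ) :
    P a b (p+1) = P a b p + if p+1 ≤ a ∧ 1 ≤ b then P (a-(p+1)) (b-1) (p+1) else 0 := by
  by_cases h : p+1 ≤ a ∧ 1 ≤ b
  case neg =>
    rw [if_neg h, add_zero]
    unfold P
    apply Fintype.card_congr
    apply Equiv.subtypeEquivRight
    intro π
    constructor
    · rintro ⟨hc, hle⟩
      refine ⟨hc, fun i hi => ?_⟩
      rcases Nat.lt_or_ge a (p+1) with ha | ha
      · have hia : i ≤ a := by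
          rw [← π.parts_sum]
          exact Multiset.single_le_sum (fun x _ => Nat.zero_le x) i hi
        omega
      · have hb : b = 0 := by omega
        rw [hb, Multiset.card_eq_zero] at hc
        rw [hc] at hi
        simp at hi
    · rintro ⟨hc, hle⟩
      exact ⟨hc, fun i hi => le_trans (hle i hi) (Nat.le_succ p)⟩
  case pos =>
    obtain ⟨ha, hb⟩ := h
    rw [if_pos ⟨ha, hb⟩]
    unfold P
    rw [Fintype.card_subtype, Fintype.card_subtype, Fintype.card_subtype]
    have hsplit := Finset.card_filter_add_card_filter_not
      (s := Finset.univ.filter (fun π : a.Partition =>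
        π.parts.card = b ∧ ∀ i ∈ π.parts, i ≤ p+1))
      (p := fun π => (p+1) ∈ π.parts)
    rw [Finset.filter_filter, Finset.filter_filter] at hsplit
    have h1 : (Finset.univ.filter fun π : a.Partition =>
            (π.parts.card = b ∧ ∀ i ∈ π.parts, i ≤ p+1) ∧ (p+1) ∉ π.parts).card
        = (Finset.univ.filter fun π : a.Partition =>
            π.parts.card = b ∧ ∀ i ∈ π.parts, i ≤ p).card := by
      congr 1
      apply Finset.filter_congr
      intro π _
      constructor
      · rintro ⟨⟨hc, hle⟩, hmem⟩
        refine ⟨hc, fun i hi => ?_⟩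
        have h3 := hle i hi
        have h4 : i ≠ p+1 := fun hip => hmem (hip ▸ hi)
        omega
      · rintro ⟨hc, hle⟩
        exact ⟨⟨hc, fun i hi => le_trans (hle i hi) (Nat.le_succ p)⟩,
          fun hmem => by have := hle _ hmem; omega⟩
    have h2 : (Finset.univ.filter fun π : a.Partition =>
            (π.parts.card = b ∧ ∀ i ∈ π.parts, i ≤ p+1) ∧ (p+1) ∈ π.parts).card
        = (Finset.univ.filter fun π : (a-(p+1)).Partition =>
            π.parts.card = b-1 ∧ ∀ i ∈ π.parts, i ≤ p+1).card := by
      apply Finset.card_bij'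
        (i := fun π hπ => removePart (p+1) π ((Finset.mem_filter.mp hπ).2).2)
        (j := fun σ _ => addPart (p+1) (Nat.succ_pos p) ha σ)
      case hi =>
        intro π hπ
        obtain ⟨-, ⟨hc, hle⟩, hmem⟩ := Finset.mem_filter.mp hπ
        refine Finset.mem_filter.mpr ⟨Finset.mem_univ _, ?_, ?_⟩
        · simp [Multiset.card_erase_of_mem hmem, hc]
        · exact fun i hi => hle i (Multiset.mem_of_mem_erase hi)
      case hj =>
        intro σ hσ
        obtain ⟨-, hc, hle⟩ := Finset.mem_filter.mp hσ
        refine Finset.mem_filter.mpr ⟨Finset.mem_univ _, ⟨?_, ?_⟩, ?_⟩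
        · simp only [addPart_parts, Multiset.card_cons, hc]; omega
        · intro i hi
          rcases Multiset.mem_cons.mp hi with h' | h'
          · omega
          · exact hle i h'
        · exact Multiset.mem_cons_self _ _
      case left_inv =>
        intro π hπ
        apply Nat.Partition.ext
        simp only [addPart_parts, removePart_parts]
        exact Multiset.cons_erase ((Finset.mem_filter.mp hπ).2).2
      case right_inv =>
        intro σ hσ
        apply Nat.Partition.ext
        simp only [addPart_parts, removePart_parts]
        exact Multiset.erase_cons_head _ _
    omega

lemma Q_rec (p a b : ℕ) :
    Q a b (p+1) = Q a b p + if p+1 ≤ a ∧ 1 ≤ b then Q (a-(p+1)) (b-1) p else 0 := by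
  by_cases h : p+1 ≤ a ∧ 1 ≤ b
  case neg =>
    rw [if_neg h, add_zero]
    unfold Q
    apply Fintype.card_congr
    apply Equiv.subtypeEquivRight
    intro π
    constructor
    · rintro ⟨hc, hnd, hle⟩
      refine ⟨hc, hnd, fun i hi => ?_⟩
      rcases Nat.lt_or_ge a (p+1) with ha | ha
      · have hia : i ≤ a := by
          rw [← π.parts_sum]
          exact Multiset.single_le_sum (fun x _ => Nat.zero_le x) i hi
        omega
      · have hb : b = 0 := by omega
        rw [hb, Multiset.card_eq_zero] at hc
        rw [hc] at hi
        simp at hi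
    · rintro ⟨hc, hnd, hle⟩
      exact ⟨hc, hnd, fun i hi => le_trans (hle i hi) (Nat.le_succ p)⟩
  case pos =>
    obtain ⟨ha, hb⟩ := h
    rw [if_pos ⟨ha, hb⟩]
    unfold Q
    rw [Fintype.card_subtype, Fintype.card_subtype, Fintype.card_subtype]
    have hsplit := Finset.card_filter_add_card_filter_not
      (s := Finset.univ.filter (fun π : a.Partition =>
        π.parts.card = b ∧ π.parts.Nodup ∧ ∀ i ∈ π.parts, i ≤ p+1))
      (p := fun π => (p+1) ∈ π.parts)
    rw [Finset.filter_filter, Finset.filter_filter] at hsplit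
    have h1 : (Finset.univ.filter fun π : a.Partition =>
            (π.parts.card = b ∧ π.parts.Nodup ∧ ∀ i ∈ π.parts, i ≤ p+1) ∧ (p+1) ∉ π.parts).card
        = (Finset.univ.filter fun π : a.Partition =>
            π.parts.card = b ∧ π.parts.Nodup ∧ ∀ i ∈ π.parts, i ≤ p).card := by
      congr 1
      apply Finset.filter_congr
      intro π _
      constructor
      · rintro ⟨⟨hc, hnd, hle⟩, hmem⟩
        refine ⟨hc, hnd, fun i hi => ?_⟩
        have h3 := hle i hi
        have h4 : i ≠ p+1 := fun hip => hmem (hip ▸ hi)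
        omega
      · rintro ⟨hc, hnd, hle⟩
        exact ⟨⟨hc, hnd, fun i hi => le_trans (hle i hi) (Nat.le_succ p)⟩,
          fun hmem => by have := hle _ hmem; omega⟩
    have h2 : (Finset.univ.filter fun π : a.Partition =>
            (π.parts.card = b ∧ π.parts.Nodup ∧ ∀ i ∈ π.parts, i ≤ p+1) ∧ (p+1) ∈ π.parts).card
        = (Finset.univ.filter fun π : (a-(p+1)).Partition =>
            π.parts.card = b-1 ∧ π.parts.Nodup ∧ ∀ i ∈ π.parts, i ≤ p).card := by
      apply Finset.card_bij'
        (i := fun π hπ => removePart (p+1) π ((Finset.mem_filter.mp hπ).2).2)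
        (j := fun σ _ => addPart (p+1) (Nat.succ_pos p) ha σ)
      case hi =>
        intro π hπ
        obtain ⟨-, ⟨hc, hnd, hle⟩, hmem⟩ := Finset.mem_filter.mp hπ
        refine Finset.mem_filter.mpr ⟨Finset.mem_univ _, ?_, ?_, ?_⟩
        · simp [Multiset.card_erase_of_mem hmem, hc]
        · exact hnd.erase _
        · intro i hi
          have h3 := hle i (Multiset.mem_of_mem_erase hi)
          have h4 : i ≠ p+1 := by
            rintro rfl
            exact hnd.notMem_erase hi
          omega
      case hj =>
        intro σ hσ
        obtain ⟨-, hc, hnd, hle⟩ := Finset.mem_filter.mp hσ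
        refine Finset.mem_filter.mpr ⟨Finset.mem_univ _, ⟨?_, ?_, ?_⟩, ?_⟩
        · simp only [addPart_parts, Multiset.card_cons, hc]; omega
        · rw [addPart_parts, Multiset.nodup_cons]
          exact ⟨fun hmem => by have := hle _ hmem; omega, hnd⟩
        · intro i hi
          rcases Multiset.mem_cons.mp hi with h' | h'
          · omega
          · have := hle i h'; omega
        · exact Multiset.mem_cons_self _ _
      case left_inv =>
        intro π hπ
        apply Nat.Partition.ext
        simp only [addPart_parts, removePart_parts]
        exact Multiset.cons_erase ((Finset.mem_filter.mp hπ).2).2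
      case right_inv =>
        intro σ hσ
        apply Nat.Partition.ext
        simp only [addPart_parts, removePart_parts]
        exact Multiset.erase_cons_head _ _
    omega

open PowerSeries Finset

noncomputable section

abbrev R2 : Type := PowerSeries (PowerSeries ℂ)

/-- double power series from coefficient function; first index = `q`-degree,
second index = `x`-degree. -/
def mk2 (f : ℕ → ℕ → ℂ) : R2 := PowerSeries.mk fun a => PowerSeries.mk fun b => f a b

def coeff2 (a b : ℕ) (f : R2) : ℂ := PowerSeries.coeff b (PowerSeries.coeff a f)

@[simp] lemma coeff2_mk (a b : ℕ) (f : ℕ → ℕ → ℂ) : coeff2 a b (mk2 f) = f a b := by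
  simp [coeff2, mk2]

lemma R2_ext {f g : R2} (h : ∀ a b, coeff2 a b f = coeff2 a b g) : f = g := by
  apply PowerSeries.ext; intro a
  apply PowerSeries.ext; intro b
  exact h a b

@[simp] lemma coeff2_one (a b : ℕ) : coeff2 a b (1 : R2) = if a = 0 ∧ b = 0 then 1 else 0 := by
  by_cases ha : a = 0 <;> by_cases hb : b = 0 <;>
    simp [coeff2, ha, hb, PowerSeries.coeff_one]

lemma coeff2_mul (f g : R2) (a b : ℕ) :
    coeff2 a b (f * g) = ∑ k ∈ range (a+1), ∑ l ∈ range (b+1),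
      coeff2 k l f * coeff2 (a-k) (b-l) g := by
  simp only [coeff2, PowerSeries.coeff_mul, map_sum]
  rw [Finset.Nat.sum_antidiagonal_eq_sum_range_succ_mk]
  refine Finset.sum_congr rfl fun k _ => ?_
  rw [Finset.Nat.sum_antidiagonal_eq_sum_range_succ_mk]

/-- the monomial `x^r q^i` -/
def M (r i : ℕ) : R2 := PowerSeries.C (PowerSeries.X ^ r : PowerSeries ℂ) * PowerSeries.X ^ i

/-- constant `c` as an element of `R2` -/
def Cc (c : ℂ) : R2 := PowerSeries.C (PowerSeries.C c : PowerSeries ℂ)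

lemma Cc_hom (c d : ℂ) : Cc (c*d) = Cc c * Cc d := by simp [Cc]

lemma coeff2_M_mul (r i : ℕ) (f : R2) (a b : ℕ) :
    coeff2 a b (M r i * f) = if i ≤ a ∧ r ≤ b then coeff2 (a-i) (b-r) f else 0 := by
  rw [M, mul_assoc, mul_comm (PowerSeries.X ^ i) f, ← mul_assoc]
  simp only [coeff2, PowerSeries.coeff_C_mul, PowerSeries.coeff_mul_X_pow']
  split
  · rw [mul_comm (PowerSeries.X ^ r : PowerSeries ℂ), PowerSeries.coeff_mul_X_pow']
    split
    · simp [‹i ≤ a›, ‹r ≤ b›]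
    · simp only [if_neg (by tauto : ¬ (i ≤ a ∧ r ≤ b))]
  · simp only [map_zero, if_neg (by tauto : ¬ (i ≤ a ∧ r ≤ b))]

lemma coeff2_Cc_mul (c : ℂ) (f : R2) (a b : ℕ) :
    coeff2 a b (Cc c * f) = c * coeff2 a b f := by
  simp [coeff2, Cc, PowerSeries.coeff_C_mul]

lemma coeff2_add (f g : R2) (a b : ℕ) :
    coeff2 a b (f + g) = coeff2 a b f + coeff2 a b g := by
  simp [coeff2]

def T (c : ℂ) (r p : ℕ) : R2 :=
  mk2 fun a b => if r ∣ a ∧ r ∣ b then c^(b/r) * (P (a/r) (b/r) p : ℂ) else 0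

lemma T_zero (c : ℂ) (r : ℕ) (hr : 0 < r) : T c r 0 = 1 := by
  apply R2_ext; intro a b
  simp only [T, coeff2_mk, coeff2_one, P_zero]
  by_cases h : r ∣ a ∧ r ∣ b
  · obtain ⟨⟨A, rfl⟩, ⟨B, rfl⟩⟩ := h
    rw [if_pos ⟨dvd_mul_right r A, dvd_mul_right r B⟩,
      Nat.mul_div_cancel_left A hr, Nat.mul_div_cancel_left B hr]
    by_cases hA : A = 0 <;> by_cases hB : B = 0 <;>
      simp [hA, hB, Nat.pos_iff_ne_zero.mp hr]
  · rw [if_neg h, if_neg]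
    rintro ⟨rfl, rfl⟩
    exact h ⟨dvd_zero r, dvd_zero r⟩

lemma T_rec (c : ℂ) (r : ℕ) (hr : 0 < r) (p : ℕ) :
    T c r (p+1) = T c r p + Cc c * M r (r*(p+1)) * T c r (p+1) := by
  apply R2_ext; intro a b
  rw [coeff2_add, mul_assoc, coeff2_Cc_mul, coeff2_M_mul]
  simp only [T, coeff2_mk]
  by_cases h : r ∣ a ∧ r ∣ b
  · obtain ⟨⟨A, rfl⟩, ⟨B, rfl⟩⟩ := h
    rw [if_pos ⟨dvd_mul_right r A, dvd_mul_right r B⟩,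
      if_pos ⟨dvd_mul_right r A, dvd_mul_right r B⟩,
      Nat.mul_div_cancel_left A hr, Nat.mul_div_cancel_left B hr, P_rec]
    by_cases h2 : p+1 ≤ A ∧ 1 ≤ B
    · rw [if_pos h2, if_pos ⟨Nat.mul_le_mul_left r h2.1, Nat.le_mul_of_pos_right r h2.2⟩]
      have e1 : r * A - r * (p+1) = r * (A - (p+1)) := by
        rw [Nat.mul_sub]
      have e2 : r * B - r = r * (B - 1) := by rw [Nat.mul_sub, mul_one]
      rw [e1, e2, if_pos ⟨dvd_mul_right _ _, dvd_mul_right _ _⟩,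
        Nat.mul_div_cancel_left _ hr, Nat.mul_div_cancel_left _ hr]
      have e3 : c ^ B = c * c ^ (B - 1) := by
        conv_lhs => rw [show B = (B-1)+1 by omega]
        rw [pow_succ]; ring
      push_cast
      rw [e3]; ring
    · rw [if_neg h2, if_neg]
      · push_cast; ring
      · rintro ⟨u, v⟩
        exact h2 ⟨Nat.le_of_mul_le_mul_left u hr, Nat.le_of_mul_le_mul_left (by simpa using v) hr⟩
  · rw [if_neg h, if_neg h, zero_add]
    split
    next h3 =>
      rw [if_neg, mul_zero]
      rintro ⟨hd1, hd2⟩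
      apply h
      constructor
      · have ha : a = (a - r*(p+1)) + r*(p+1) := (Nat.sub_add_cancel h3.1).symm
        rw [ha]; exact dvd_add hd1 (Dvd.intro _ rfl)
      · have hb : b = (b - r) + r := (Nat.sub_add_cancel h3.2).symm
        rw [hb]; exact dvd_add hd2 (dvd_refl r)
    next => rw [mul_zero]

lemma T_prod (c : ℂ) (r : ℕ) (hr : 0 < r) (p : ℕ) :
    T c r p * ∏ i ∈ Finset.Icc 1 p, (1 - Cc c * M r (r*i)) = 1 := by
  induction p with
  | zero => simp [T_zero c r hr]
  | succ p ih =>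
    rw [Finset.prod_Icc_succ_top (Nat.le_add_left 1 p)]
    have hrec := T_rec c r hr p
    have key : T c r (p+1) * (1 - Cc c * M r (r*(p+1))) = T c r p := by
      linear_combination hrec
    calc T c r (p+1) * ((∏ i ∈ Finset.Icc 1 p, (1 - Cc c * M r (r*i))) *
            (1 - Cc c * M r (r*(p+1))))
        = (T c r (p+1) * (1 - Cc c * M r (r*(p+1)))) *
            ∏ i ∈ Finset.Icc 1 p, (1 - Cc c * M r (r*i)) := by ring
      _ = T c r p * ∏ i ∈ Finset.Icc 1 p, (1 - Cc c * M r (r*i)) := by rw [key]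
      _ = 1 := ih

def QT (p : ℕ) : R2 := mk2 fun a b => (Q a b p : ℂ)

lemma QT_prod (p : ℕ) : QT p = ∏ i ∈ Finset.Icc 1 p, (1 + M 1 i) := by
  induction p with
  | zero =>
    apply R2_ext; intro a b
    rw [Finset.Icc_eq_empty (by norm_num), Finset.prod_empty, coeff2_one]
    simp only [QT, coeff2_mk, Q_zero]
    by_cases ha : a = 0 <;> by_cases hb : b = 0 <;> simp [ha, hb]
  | succ p ih =>
    rw [Finset.prod_Icc_succ_top (Nat.le_add_left 1 p), ← ih]
    apply R2_ext; intro a b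
    rw [mul_add, mul_one, coeff2_add, mul_comm (QT p) (M 1 (p+1)), coeff2_M_mul]
    simp only [QT, coeff2_mk]
    rw [Q_rec]
    by_cases h : p+1 ≤ a ∧ 1 ≤ b <;> simp [h]

lemma M_pow3 (i : ℕ) : M 1 i ^ 3 = M 3 (3*i) := by
  rw [M, M, mul_pow, ← map_pow, ← pow_mul, ← pow_mul, one_mul, mul_comm 3 i]

lemma factor_id (z e : ℂ) (hs : z + e = 1) (hm : z * e = 1) (i : ℕ) :
    (1 + M 1 i) * ((1 - Cc z * M 1 i) * (1 - Cc e * M 1 i)) = 1 + M 3 (3*i) := by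
  rw [← M_pow3]
  have h1 : Cc z + Cc e = 1 := by
    rw [Cc, Cc, ← map_add, ← map_add, hs, map_one, map_one]
  have h2 : Cc z * Cc e = 1 := by
    rw [← Cc_hom, hm, Cc, map_one, map_one]
  linear_combination (-(1 + M 1 i) * M 1 i) * h1 + ((1 + M 1 i) * (M 1 i)^2) * h2

lemma main_id (z e : ℂ) (hs : z + e = 1) (hm : z * e = 1) (p : ℕ) :
    T z 1 p * T e 1 p = T (-1) 3 p * QT p := by
  have h1 := T_prod z 1 one_pos p
  have h2 := T_prod e 1 one_pos p
  have h3 := T_prod (-1) 3 (by norm_num) p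
  simp only [one_mul] at h1 h2
  have hneg : ∀ i : ℕ, (1 : R2) - Cc (-1) * M 3 (3*i) = 1 + M 3 (3*i) := by
    intro i; simp only [Cc, map_neg, map_one]; ring
  simp only [hneg] at h3
  have h4 : (∏ i ∈ Finset.Icc 1 p, (1 + M 1 i)) *
      ((∏ i ∈ Finset.Icc 1 p, (1 - Cc z * M 1 i)) *
        (∏ i ∈ Finset.Icc 1 p, (1 - Cc e * M 1 i)))
      = ∏ i ∈ Finset.Icc 1 p, (1 + M 3 (3*i)) := by
    rw [← Finset.prod_mul_distrib, ← Finset.prod_mul_distrib]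
    exact Finset.prod_congr rfl fun i _ => factor_id z e hs hm i
  calc T z 1 p * T e 1 p
      = T z 1 p * T e 1 p * (T (-1) 3 p * ∏ i ∈ Finset.Icc 1 p, (1 + M 3 (3*i))) := by
        rw [h3, mul_one]
    _ = (T z 1 p * ∏ i ∈ Finset.Icc 1 p, (1 - Cc z * M 1 i)) *
        ((T e 1 p * ∏ i ∈ Finset.Icc 1 p, (1 - Cc e * M 1 i)) *
          (T (-1) 3 p * ∏ i ∈ Finset.Icc 1 p, (1 + M 1 i))) := by
        rw [← h4]; ring
    _ = T (-1) 3 p * QT p := by rw [h1, h2, QT_prod, one_mul, one_mul]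

lemma sum_div3 (N : ℕ) (h : ℕ → ℂ) :
    (∑ c ∈ Finset.range (N+1), if 3 ∣ c then h c else 0)
      = ∑ k ∈ Finset.range (N/3+1), h (3*k) := by
  rw [← Finset.sum_filter]
  have himg : (Finset.range (N+1)).filter (fun c => 3 ∣ c)
      = (Finset.range (N/3+1)).image (fun k => 3*k) := by
    ext x
    simp only [Finset.mem_filter, Finset.mem_range, Finset.mem_image, Nat.lt_succ_iff]
    constructor
    · rintro ⟨hx, ⟨k, rfl⟩⟩
      exact ⟨k, (Nat.le_div_iff_mul_le (by norm_num)).mpr (by omega), rfl⟩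
    · rintro ⟨k, hk, rfl⟩
      have h3 : k * 3 ≤ N := (Nat.le_div_iff_mul_le (by norm_num)).mp hk
      exact ⟨by omega, ⟨k, rfl⟩⟩
  rw [himg, Finset.sum_image (by intro a _ b _ hab; simp only at hab; omega)]

lemma coeff_left (n m p : ℕ) :
    coeff2 n m (T (-1) 3 p * QT p)
      = ∑ k ∈ Finset.range (n/3 + 1), ∑ l ∈ Finset.range (m/3 + 1),
          (-1 : ℂ) ^ l * Q (n - 3*k) (m - 3*l) p * P k l p := by
  rw [coeff2_mul]
  simp only [T, QT, coeff2_mk, ite_mul, zero_mul]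
  have step1 : ∀ k, (∑ l ∈ Finset.range (m+1),
        if 3 ∣ k ∧ 3 ∣ l then
          (-1:ℂ)^(l/3) * (P (k/3) (l/3) p : ℂ) * (Q (n-k) (m-l) p : ℂ) else 0)
      = if 3 ∣ k then (∑ l ∈ Finset.range (m+1),
          if 3 ∣ l then (-1:ℂ)^(l/3) * (P (k/3) (l/3) p : ℂ) * (Q (n-k) (m-l) p : ℂ) else 0)
        else 0 := by
    intro k
    by_cases hk : 3 ∣ k
    · simp [hk]
    · simp [hk]
  rw [Finset.sum_congr rfl fun k _ => step1 k, sum_div3]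
  refine Finset.sum_congr rfl fun k _ => ?_
  rw [sum_div3]
  refine Finset.sum_congr rfl fun l _ => ?_
  rw [Nat.mul_div_cancel_left k (by norm_num), Nat.mul_div_cancel_left l (by norm_num)]
  ring

lemma coeff_right (z e : ℂ) (n m p : ℕ) :
    coeff2 n m (T z 1 p * T e 1 p)
      = ∑ k ∈ Finset.range (n + 1), ∑ l ∈ Finset.range (m + 1),
          z ^ l * (P k l p : ℂ) * (e ^ (m - l) * (P (n-k) (m-l) p : ℂ)) := by
  rw [coeff2_mul]
  simp [T, Nat.div_one, Nat.one_dvd]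


theorem stmt_6 (n m p : ℕ) :
    ∑ k ∈ Finset.range (n / 3 + 1), ∑ l ∈ Finset.range (m / 3 + 1),
      (-1 : ℝ) ^ l * Q (n - 3 * k) (m - 3 * l) p * P k l p
    = ∑ k ∈ Finset.range (n + 1), ∑ l ∈ Finset.range (m + 1),
      Real.cos ((2 * (l : ℝ) - m) * Real.pi / 3) * P (n - k) (m - l) p * P k l p := by
  set z : ℂ := Complex.exp (↑(Real.pi/3) * Complex.I) with hz
  set e : ℂ := Complex.exp (-↑(Real.pi/3) * Complex.I) with he
  have hs : z + e = 1 := by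
    have h := Complex.two_cos (x := (↑(Real.pi/3) : ℂ))
    rw [← Complex.ofReal_cos, Real.cos_pi_div_three] at h
    push_cast at h
    rw [hz, he]
    push_cast
    linear_combination -h
  have hm2 : z * e = 1 := by
    rw [hz, he, ← Complex.exp_add,
      show (↑(Real.pi/3) * Complex.I + -↑(Real.pi/3) * Complex.I : ℂ) = 0 by ring,
      Complex.exp_zero]
  have hmain := main_id z e hs hm2 p
  have hLre : (coeff2 n m (T (-1) 3 p * QT p)).re
      = ∑ k ∈ Finset.range (n / 3 + 1), ∑ l ∈ Finset.range (m / 3 + 1),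
          (-1 : ℝ) ^ l * Q (n - 3 * k) (m - 3 * l) p * P k l p := by
    rw [coeff_left, Complex.re_sum]
    refine Finset.sum_congr rfl fun k _ => ?_
    rw [Complex.re_sum]
    refine Finset.sum_congr rfl fun l _ => ?_
    have hterm : ((-1 : ℂ)) ^ l * (Q (n - 3*k) (m - 3*l) p : ℂ) * (P k l p : ℂ)
        = (((-1 : ℝ) ^ l * Q (n - 3*k) (m - 3*l) p * P k l p : ℝ) : ℂ) := by
      push_cast; ring
    rw [hterm, Complex.ofReal_re]
  have hRre : (coeff2 n m (T z 1 p * T e 1 p)).re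
      = ∑ k ∈ Finset.range (n + 1), ∑ l ∈ Finset.range (m + 1),
          Real.cos ((2 * (l : ℝ) - m) * Real.pi / 3) * P (n - k) (m - l) p * P k l p := by
    rw [coeff_right, Complex.re_sum]
    refine Finset.sum_congr rfl fun k _ => ?_
    rw [Complex.re_sum]
    refine Finset.sum_congr rfl fun l hl => ?_
    have hlm : l ≤ m := Nat.lt_succ_iff.mp (Finset.mem_range.mp hl)
    have hexp : z ^ l * e ^ (m - l)
        = Complex.exp (↑((2 * (l : ℝ) - m) * Real.pi / 3) * Complex.I) := by
      rw [hz, he, ← Complex.exp_nat_mul, ← Complex.exp_nat_mul, ← Complex.exp_add]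
      congr 1
      have hc : ((m - l : ℕ) : ℂ) = (m : ℂ) - (l : ℂ) := by
        exact Nat.cast_sub hlm
      rw [hc]
      push_cast
      ring
    have h2 : z ^ l * (P k l p : ℂ) * (e ^ (m - l) * (P (n-k) (m-l) p : ℂ))
        = Complex.exp (↑((2 * (l : ℝ) - m) * Real.pi / 3) * Complex.I)
          * ((((P (n-k) (m-l) p : ℝ) * (P k l p : ℝ)) : ℝ) : ℂ) := by
      rw [← hexp]; push_cast; ring
    rw [h2, mul_comm, Complex.re_ofReal_mul, Complex.exp_ofReal_mul_I_re]
    ring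
  rw [← hLre, ← hRre, hmain]
end
end

section
/- For all nonnegative integers n, m, p, the following identity holds in ℝ: Σ_{k=0}^{⌊n/3⌋} Σ_{l=0}^{⌊m/3⌋} (−1)^l · P(n−3k, m−3l, p) · Q(k, l, p) = Σ_{k=0}^{n} Σ_{l=0}^{m} cos((2l−m)π/3) · Q(n−k, m−l, p) · Q(k, l, p). -/
namespace Stmt7Aux
noncomputable section
open Finset Polynomial

abbrev R : Type := Polynomial (Polynomial ℂ)

def XX : R := Polynomial.C Polynomial.X
def YY : R := Polynomial.X
def mono (a b : ℕ) : R := YY ^ b * XX ^ a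
def cc (c : ℂ) : R := Polynomial.C (Polynomial.C c)
def cf (f : R) (a b : ℕ) : ℂ := (f.coeff b).coeff a

lemma cc_mul (c d : ℂ) : cc c * cc d = cc (c * d) := by
  rw [cc, cc, cc, ← Polynomial.C_mul, ← Polynomial.C_mul]
lemma cc_add (c d : ℂ) : cc c + cc d = cc (c + d) := by
  rw [cc, cc, cc, ← Polynomial.C_add, ← Polynomial.C_add]
lemma cc_one : cc 1 = 1 := by simp [cc]
lemma cc_pow (c : ℂ) (k : ℕ) : cc c ^ k = cc (c ^ k) := by
  rw [cc, cc, ← Polynomial.C_pow, ← Polynomial.C_pow]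
lemma cc_neg_one : cc (-1) = -1 := by simp [cc]

lemma mono_mul (a b c d : ℕ) : mono a b * mono c d = mono (a + c) (b + d) := by
  simp [mono, pow_add]; ring

lemma mono_pow (a b e : ℕ) : mono a b ^ e = mono (a * e) (b * e) := by
  simp [mono, mul_pow, ← pow_mul]

lemma cf_sum {ι : Type*} (s : Finset ι) (f : ι → R) (a b : ℕ) :
    cf (∑ i ∈ s, f i) a b = ∑ i ∈ s, cf (f i) a b := by
  simp [cf, Polynomial.finset_sum_coeff]

lemma cf_ccmul (c : ℂ) (g : R) (a b : ℕ) : cf (cc c * g) a b = c * cf g a b := by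
  simp [cf, cc, Polynomial.coeff_C_mul]

lemma cf_shift (f : R) (A B a b : ℕ) :
    cf (f * mono A B) a b = if A ≤ a ∧ B ≤ b then cf f (a - A) (b - B) else 0 := by
  have h1 : f * mono A B = (f * Polynomial.C (Polynomial.X ^ A)) * Polynomial.X ^ B := by
    rw [mono, XX, YY, ← Polynomial.C_pow]; ring
  rw [cf, h1, Polynomial.coeff_mul_X_pow']
  by_cases hb : B ≤ b
  · simp only [hb, if_true, Polynomial.coeff_mul_C, Polynomial.coeff_mul_X_pow']
    by_cases ha : A ≤ a <;> simp [ha, hb, cf]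
  · simp [hb]

lemma cf_cc_mono (c : ℂ) (A B a b : ℕ) :
    cf (cc c * mono A B) a b = if A = a ∧ B = b then c else 0 := by
  rw [cf_shift]
  have hcc : ∀ u v, cf (cc c) u v = if u = 0 ∧ v = 0 then c else 0 := by
    intro u v
    simp only [cf, cc, Polynomial.coeff_C, apply_ite (fun q : Polynomial ℂ => q.coeff u),
      Polynomial.coeff_zero]
    split_ifs <;> simp_all
  by_cases h : A ≤ a ∧ B ≤ b
  · rw [if_pos h, hcc]
    by_cases h2 : A = a ∧ B = b
    · rw [if_pos (by omega), if_pos h2]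
    · rw [if_neg (by omega), if_neg h2]
  · rw [if_neg h, if_neg (by omega)]


lemma prod_one_add {ι : Type*} [DecidableEq ι] (s : Finset ι) (f : ι → R) :
    ∏ i ∈ s, (1 + f i) = ∑ t ∈ s.powerset, ∏ i ∈ t, f i := by
  simp_rw [add_comm (1 : R)]
  rw [Finset.prod_add]
  simp

lemma prod_mono (S : Finset ℕ) : ∏ i ∈ S, mono i 1 = mono (∑ i ∈ S, i) S.card := by
  simp only [mono, pow_one]
  rw [Finset.prod_mul_distrib, Finset.prod_const, Finset.prod_pow_eq_pow_sum]

def fQc (c : ℂ) (p : ℕ) : R := ∏ i ∈ Finset.Icc 1 p, (1 + cc c * mono i 1)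
def Gp (p : ℕ) : R := ∏ i ∈ Finset.Icc 1 p, (1 + mono i 1 + mono i 1 ^ 2)
def W (e p : ℕ) : R := ∏ i ∈ Finset.Icc 1 p, (1 - mono i 1 ^ e)
def fP (p N : ℕ) : R := ∏ i ∈ Finset.Icc 1 p, (∑ j ∈ Finset.range (N + 1), mono i 1 ^ j)

lemma fQc_expand (c : ℂ) (p : ℕ) :
    fQc c p = ∑ S ∈ (Finset.Icc 1 p).powerset, cc (c ^ S.card) * mono (∑ i ∈ S, i) S.card := by
  rw [fQc, prod_one_add]
  refine Finset.sum_congr rfl fun S _ => ?_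
  rw [Finset.prod_mul_distrib, Finset.prod_const, prod_mono, cc_pow]

lemma W_expand (e p : ℕ) :
    W e p = ∑ S ∈ (Finset.Icc 1 p).powerset,
      cc ((-1 : ℂ) ^ S.card) * mono ((∑ i ∈ S, i) * e) (S.card * e) := by
  have : ∀ i : ℕ, (1 : R) - mono i 1 ^ e = 1 + (-(mono i 1 ^ e)) := fun i => by ring
  rw [W]
  simp_rw [this]
  rw [prod_one_add]
  refine Finset.sum_congr rfl fun S _ => ?_
  have : ∀ i ∈ S, -(mono i 1 ^ e) = (-1 : R) * mono i 1 ^ e := fun i _ => by ring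
  rw [Finset.prod_congr rfl this, Finset.prod_mul_distrib, Finset.prod_const,
    Finset.prod_pow, prod_mono, mono_pow, ← cc_neg_one, cc_pow]

lemma G_mul_W1 (p : ℕ) : Gp p * W 1 p = W 3 p := by
  rw [Gp, W, W, ← Finset.prod_mul_distrib]
  refine Finset.prod_congr rfl fun i _ => ?_
  ring

lemma fP_mul_W1 (p N : ℕ) : fP p N * W 1 p = W (N + 1) p := by
  rw [fP, W, W, ← Finset.prod_mul_distrib]
  refine Finset.prod_congr rfl fun i _ => ?_
  linear_combination (-1 : R) * geom_sum_mul (mono i 1) (N + 1)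

lemma fQc_mul_fQc (c c' : ℂ) (h1 : c * c' = 1) (h2 : c + c' = 1) (p : ℕ) :
    fQc c p * fQc c' p = Gp p := by
  rw [fQc, fQc, Gp, ← Finset.prod_mul_distrib]
  refine Finset.prod_congr rfl fun i _ => ?_
  have e1 : cc c * cc c' = 1 := by rw [cc_mul, h1, cc_one]
  have e2 : cc c + cc c' = 1 := by rw [cc_add, h2, cc_one]
  linear_combination (mono i 1) * e2 + (mono i 1) ^ 2 * e1


def om : ℂ := Complex.exp ((Real.pi / 3 : ℝ) * Complex.I)
def om' : ℂ := Complex.exp (-((Real.pi / 3 : ℝ) * Complex.I))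

lemma om_mul_om' : om * om' = 1 := by
  rw [om, om', ← Complex.exp_add, add_neg_cancel, Complex.exp_zero]

lemma om_add_om' : om + om' = 1 := by
  have h : -((Real.pi / 3 : ℝ) * Complex.I) = (-(Real.pi / 3 : ℝ) : ℂ) * Complex.I := by ring
  rw [om, om', h, Complex.exp_mul_I, Complex.exp_mul_I, Complex.cos_neg, Complex.sin_neg,
    ← Complex.ofReal_cos, Real.cos_pi_div_three]
  push_cast
  ring

lemma re_om_pow (l m : ℕ) (h : l ≤ m) :
    (om ^ l * om' ^ (m - l)).re = Real.cos ((2 * (l : ℝ) - m) * Real.pi / 3) := by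
  rw [om, om', ← Complex.exp_nat_mul, ← Complex.exp_nat_mul, ← Complex.exp_add]
  have harg : (l : ℂ) * ((Real.pi / 3 : ℝ) * Complex.I)
      + ((m - l : ℕ) : ℂ) * -((Real.pi / 3 : ℝ) * Complex.I)
      = (((2 * (l : ℝ) - m) * Real.pi / 3 : ℝ) : ℂ) * Complex.I := by
    have : ((m - l : ℕ) : ℂ) = (m : ℂ) - l := by
      push_cast [Nat.cast_sub h]; ring
    rw [this]; push_cast; ring
  rw [harg, Complex.exp_ofReal_mul_I_re]


lemma sum_finset_val (S : Finset ℕ) : S.val.sum = ∑ i ∈ S, i := by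
  rw [Finset.sum, Multiset.map_id']

lemma Qcard (n m p : ℕ) :
    Q n m p = ((Finset.Icc 1 p).powerset.filter
      (fun S => (∑ i ∈ S, i) = n ∧ S.card = m)).card := by
  classical
  rw [Q, Fintype.card_subtype]
  refine Finset.card_bij' (fun π hπ => (⟨π.parts, ?_⟩ : Finset ℕ))
    (fun S hS => (⟨S.val, ?_, ?_⟩ : n.Partition)) ?_ ?_ ?_ ?_
  · exact ((Finset.mem_filter.mp hπ).2).2.1
  · intro i hi
    rw [Finset.mem_filter, Finset.mem_powerset] at hS
    have := hS.1 hi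
    rw [Finset.mem_Icc] at this
    omega
  · rw [sum_finset_val]
    exact (Finset.mem_filter.mp hS).2.1
  · intro π hπ
    rw [Finset.mem_filter] at hπ ⊢
    obtain ⟨-, hcard, hnd, hle⟩ := hπ
    refine ⟨Finset.mem_powerset.mpr ?_, ?_, ?_⟩
    · intro i hi
      rw [Finset.mem_Icc]
      exact ⟨π.parts_pos hi, hle i hi⟩
    · rw [← sum_finset_val]
      exact π.parts_sum
    · exact hcard
  · intro S hS
    rw [Finset.mem_filter] at hS ⊢
    exact ⟨Finset.mem_univ _, hS.2.2, S.nodup,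
      fun i hi => (Finset.mem_Icc.mp (Finset.mem_powerset.mp hS.1 hi)).2⟩
  · intro π hπ
    exact Nat.Partition.ext rfl
  · intro S hS
    cases S
    rfl

lemma P0 (a b : ℕ) : P a b 0 = if a = 0 ∧ b = 0 then 1 else 0 := by
  classical
  split_ifs with h
  · obtain ⟨rfl, rfl⟩ := h
    rw [P, Fintype.card_eq_one_iff]
    refine ⟨⟨default, by simp⟩, fun y => Subtype.ext (Subsingleton.elim _ _)⟩
  · rw [P, Fintype.card_eq_zero_iff]
    constructor
    intro ⟨π, hcard, hle⟩
    have hparts : π.parts = 0 := by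
      apply Multiset.eq_zero_of_forall_notMem
      intro i hi
      exact absurd (hle i hi) (by have := π.parts_pos hi; omega)
    apply h
    constructor
    · rw [← π.parts_sum, hparts]; rfl
    · rw [← hcard, hparts]; rfl


lemma Prec (a b p N : ℕ) (hb : b ≤ N) :
    P a b (p + 1) = ∑ j ∈ Finset.range (N + 1),
      if (p + 1) * j ≤ a ∧ j ≤ b then P (a - (p + 1) * j) (b - j) p else 0 := by
  rw [P, Fintype.card_subtype]
  rw [Finset.card_eq_sum_card_fiberwise
    (f := fun π : a.Partition => π.parts.count (p + 1)) (t := Finset.range (N + 1)) ?_]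
  swap
  · intro π hπ
    rw [Finset.mem_coe, Finset.mem_filter] at hπ
    rw [Finset.mem_coe, Finset.mem_range]
    have h1 := Multiset.count_le_card (p + 1) π.parts
    have h2 := hπ.2.1
    show π.parts.count (p + 1) < N + 1
    omega
  refine Finset.sum_congr rfl fun j hj => ?_
  by_cases hcond : (p + 1) * j ≤ a ∧ j ≤ b
  · rw [if_pos hcond, P, Fintype.card_subtype]
    have key : ∀ π : a.Partition, π ∈ (Finset.univ.filter
        (fun π : a.Partition => Multiset.card π.parts = b ∧ ∀ i ∈ π.parts, i ≤ p + 1)).filter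
        (fun π => π.parts.count (p + 1) = j) ↔
        Multiset.card π.parts = b ∧ (∀ i ∈ π.parts, i ≤ p + 1) ∧ π.parts.count (p + 1) = j := by
      intro π
      simp only [Finset.mem_filter, Finset.mem_univ, true_and]
      tauto
    refine Finset.card_bij'
      (fun π hπ => (⟨π.parts.filter (fun i => ¬ i = p + 1), ?_, ?_⟩ :
        (a - (p + 1) * j).Partition))
      (fun π' hπ' => (⟨π'.parts + Multiset.replicate j (p + 1), ?_, ?_⟩ : a.Partition))
      ?_ ?_ ?_ ?_
    · intro i hi
      exact π.parts_pos (Multiset.mem_of_mem_filter hi)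
    · -- sum of filtered = a - (p+1)*j
      obtain ⟨hcard, hle, hcount⟩ := (key π).mp hπ
      have hsplit := Multiset.filter_add_not (fun i => i = p + 1) π.parts
      have hsum : (π.parts.filter (fun i => i = p + 1)).sum
          + (π.parts.filter (fun i => ¬ i = p + 1)).sum = a := by
        rw [← Multiset.sum_add, hsplit, π.parts_sum]
      have heq : π.parts.filter (fun i => i = p + 1)
          = Multiset.replicate j (p + 1) := by
        rw [Multiset.filter_eq', hcount]
      rw [heq, Multiset.sum_replicate, smul_eq_mul, mul_comm j (p + 1)] at hsum
      omega
    · -- positivity for j-map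
      intro i hi
      rw [Multiset.mem_add] at hi
      rcases hi with hi | hi
      · exact π'.parts_pos hi
      · rw [Multiset.eq_of_mem_replicate hi]; omega
    · -- sum for j-map
      rw [Multiset.sum_add, π'.parts_sum, Multiset.sum_replicate, smul_eq_mul,
        mul_comm j (p + 1)]
      omega
    · -- hi : forward map lands in target
      intro π hπ
      obtain ⟨hcard, hle, hcount⟩ := (key π).mp hπ
      rw [Finset.mem_filter]
      refine ⟨Finset.mem_univ _, ?_, ?_⟩
      · have h1 : Multiset.card (π.parts.filter (fun i => i = p + 1)) = j := by
          rw [Multiset.filter_eq', hcount, Multiset.card_replicate]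
        have h2 := Multiset.filter_add_not (fun i => i = p + 1) π.parts
        have h3 : Multiset.card (π.parts.filter (fun i => i = p + 1))
            + Multiset.card (π.parts.filter (fun i => ¬ i = p + 1)) = b := by
          rw [← Multiset.card_add, h2, hcard]
        show Multiset.card (Multiset.filter (fun i => ¬ i = p + 1) π.parts) = b - j
        omega
      · intro i hi
        rw [Multiset.mem_filter] at hi
        have := hle i hi.1
        have := hi.2
        omega
    · -- hj : backward map lands in fiber
      intro π' hπ'
      rw [Finset.mem_filter] at hπ'
      obtain ⟨-, hcard, hle⟩ := hπ'
      rw [key]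
      have hnot : (p + 1) ∉ π'.parts := fun hmem => by have := hle _ hmem; omega
      refine ⟨?_, ?_, ?_⟩
      · rw [Multiset.card_add, hcard, Multiset.card_replicate]
        omega
      · intro i hi
        rw [Multiset.mem_add] at hi
        rcases hi with hi | hi
        · exact Nat.le_succ_of_le (hle i hi)
        · rw [Multiset.eq_of_mem_replicate hi]
      · rw [Multiset.count_add, Multiset.count_eq_zero_of_notMem hnot,
          Multiset.count_replicate_self, zero_add]
    · -- left inverse
      intro π hπ
      obtain ⟨hcard, hle, hcount⟩ := (key π).mp hπ
      apply Nat.Partition.ext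
      show π.parts.filter (fun i => ¬ i = p + 1) + Multiset.replicate j (p + 1) = π.parts
      have heq : π.parts.filter (fun i => i = p + 1)
          = Multiset.replicate j (p + 1) := by
        rw [Multiset.filter_eq', hcount]
      rw [← heq, add_comm, Multiset.filter_add_not]
    · -- right inverse
      intro π' hπ'
      rw [Finset.mem_filter] at hπ'
      obtain ⟨-, hcard, hle⟩ := hπ'
      apply Nat.Partition.ext
      show (π'.parts + Multiset.replicate j (p + 1)).filter (fun i => ¬ i = p + 1) = π'.parts
      rw [Multiset.filter_add]
      have h1 : π'.parts.filter (fun i => ¬ i = p + 1) = π'.parts := by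
        rw [Multiset.filter_eq_self]
        intro i hi
        have := hle i hi
        omega
      have h2 : (Multiset.replicate j (p + 1)).filter (fun i => ¬ i = p + 1) = 0 := by
        rw [Multiset.filter_eq_nil]
        intro i hi
        rw [Multiset.eq_of_mem_replicate hi]
        simp
      rw [h1, h2, add_zero]
  · rw [if_neg hcond, Finset.card_eq_zero, Finset.eq_empty_iff_forall_notMem]
    intro π hπ
    rw [Finset.mem_filter, Finset.mem_filter] at hπ
    obtain ⟨⟨-, hcard, hle⟩, hcount⟩ := hπ
    apply hcond
    have hrep : Multiset.replicate j (p + 1) ≤ π.parts :=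
      Multiset.le_count_iff_replicate_le.mp (le_of_eq hcount.symm)
    obtain ⟨u, hu⟩ := Multiset.le_iff_exists_add.mp hrep
    have hsum : (Multiset.replicate j (p + 1)).sum + u.sum = a := by
      rw [← Multiset.sum_add, ← hu, π.parts_sum]
    rw [Multiset.sum_replicate, smul_eq_mul, mul_comm j (p + 1)] at hsum
    have hcc := Multiset.count_le_card (p + 1) π.parts
    constructor
    · omega
    · omega


lemma cf_one (a b : ℕ) : cf 1 a b = if a = 0 ∧ b = 0 then 1 else 0 := by
  have h : (1 : R) = cc 1 * mono 0 0 := by simp [cc, mono]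
  rw [h, cf_cc_mono]
  congr 1
  simp [eq_comm]

lemma Pcf (p : ℕ) : ∀ N a b : ℕ, b ≤ N → cf (fP p N) a b = (P a b p : ℂ) := by
  induction p with
  | zero =>
    intro N a b hb
    rw [fP, show Finset.Icc 1 0 = ∅ from rfl, Finset.prod_empty, cf_one, P0]
    simp [apply_ite (Nat.cast : ℕ → ℂ)]
  | succ p ih =>
    intro N a b hb
    have hins : Finset.Icc 1 (p + 1) = insert (p + 1) (Finset.Icc 1 p) := by
      rw [← Finset.insert_Icc_right_eq_Icc_add_one (by omega)]
    rw [fP, hins, Finset.prod_insert (by simp), ← fP]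
    have hmono : ∀ j : ℕ, mono (p + 1) 1 ^ j = mono ((p + 1) * j) j := by
      intro j
      rw [mono_pow, one_mul]
    simp_rw [hmono]
    rw [Finset.sum_mul]
    have : ∀ j : ℕ, mono ((p + 1) * j) j * fP p N = fP p N * mono ((p + 1) * j) j :=
      fun j => mul_comm _ _
    simp_rw [this, cf_sum, cf_shift]
    rw [Prec a b p N hb]
    push_cast
    refine Finset.sum_congr rfl fun j hj => ?_
    by_cases hc : (p + 1) * j ≤ a ∧ j ≤ b
    · rw [if_pos hc, if_pos hc, ih N _ _ (by omega)]
    · rw [if_neg hc, if_neg hc]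


lemma lhs_eq (n m p : ℕ) :
    ∑ k ∈ Finset.range (n / 3 + 1), ∑ l ∈ Finset.range (m / 3 + 1),
      ((-1 : ℂ) ^ l * P (n - 3 * k) (m - 3 * l) p * Q k l p)
    = cf (fP p m * W 3 p) n m := by
  rw [W_expand, Finset.mul_sum]
  have hP : ∀ x c : ℕ, cf (fP p m) x (m - c) = (P x (m - c) p : ℂ) :=
    fun x c => Pcf p m x _ (by omega)
  simp_rw [mul_left_comm (fP p m), cf_sum, cf_ccmul, cf_shift, hP, mul_ite, mul_zero]
  rw [← Finset.sum_filter]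
  have hmaps : ∀ S ∈ (Finset.Icc 1 p).powerset.filter
      (fun S => (∑ i ∈ S, i) * 3 ≤ n ∧ S.card * 3 ≤ m),
      (((∑ i ∈ S, i), S.card) : ℕ × ℕ)
        ∈ Finset.range (n / 3 + 1) ×ˢ Finset.range (m / 3 + 1) := by
    intro S hS
    rw [Finset.mem_filter] at hS
    rw [Finset.mem_product, Finset.mem_range, Finset.mem_range]
    omega
  rw [← Finset.sum_fiberwise_of_maps_to hmaps, Finset.sum_product]
  refine Finset.sum_congr rfl fun k hk => Finset.sum_congr rfl fun l hl => ?_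
  rw [Finset.mem_range] at hk hl
  have hset : ((Finset.Icc 1 p).powerset.filter
      (fun S => (∑ i ∈ S, i) * 3 ≤ n ∧ S.card * 3 ≤ m)).filter
      (fun S => (((∑ i ∈ S, i), S.card) : ℕ × ℕ) = (k, l))
      = (Finset.Icc 1 p).powerset.filter (fun S => (∑ i ∈ S, i) = k ∧ S.card = l) := by
    ext S
    simp only [Finset.mem_filter, Prod.mk.injEq]
    constructor
    · rintro ⟨⟨hsub, -⟩, h1, h2⟩
      exact ⟨hsub, h1, h2⟩
    · rintro ⟨hsub, h1, h2⟩
      refine ⟨⟨hsub, ?_, ?_⟩, h1, h2⟩ <;> omega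
  rw [hset]
  have hcongr : ∀ S ∈ (Finset.Icc 1 p).powerset.filter
      (fun S => (∑ i ∈ S, i) = k ∧ S.card = l),
      ((-1 : ℂ) ^ S.card * (P (n - (∑ i ∈ S, i) * 3) (m - S.card * 3) p : ℂ))
      = (-1 : ℂ) ^ l * (P (n - 3 * k) (m - 3 * l) p : ℂ) := by
    intro S hS
    rw [Finset.mem_filter] at hS
    rw [hS.2.1, hS.2.2, mul_comm k 3, mul_comm l 3]
  rw [Finset.sum_congr rfl hcongr, Finset.sum_const, ← Qcard, nsmul_eq_mul]
  ring


lemma cf_G_junk (n m p : ℕ) : cf (Gp p * W (m + 1) p) n m = cf (Gp p) n m := by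
  rw [W_expand, Finset.mul_sum]
  simp_rw [mul_left_comm (Gp p), cf_sum, cf_ccmul, cf_shift]
  rw [Finset.sum_eq_single_of_mem ∅ (Finset.empty_mem_powerset _)]
  · simp
  · intro S hS hne
    have hcard : 1 ≤ S.card := Finset.card_pos.mpr (Finset.nonempty_iff_ne_empty.mpr hne)
    have hm : m + 1 ≤ S.card * (m + 1) := Nat.le_mul_of_pos_left (m + 1) hcard
    rw [if_neg (fun hcon => by omega), mul_zero]

lemma middle_eq (n m p : ℕ) : cf (fP p m * W 3 p) n m = cf (Gp p) n m := by
  have h : fP p m * W 3 p = Gp p * W (m + 1) p := by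
    calc fP p m * W 3 p = fP p m * (Gp p * W 1 p) := by rw [G_mul_W1]
    _ = Gp p * (fP p m * W 1 p) := by ring
    _ = Gp p * W (m + 1) p := by rw [fP_mul_W1]
  rw [h, cf_G_junk]


lemma cf_ccmono_mul (c d : ℂ) (A B C D a b : ℕ) :
    cf ((cc c * mono A B) * (cc d * mono C D)) a b
      = if A + C = a ∧ B + D = b then c * d else 0 := by
  rw [mul_mul_mul_comm, cc_mul, mono_mul, cf_cc_mono]

lemma rhs_eq (n m p : ℕ) :
    (cf (fQc om p * fQc om' p) n m).re
    = ∑ k ∈ Finset.range (n + 1), ∑ l ∈ Finset.range (m + 1),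
        Real.cos ((2 * (l : ℝ) - m) * Real.pi / 3) * Q (n - k) (m - l) p * Q k l p := by
  rw [fQc_expand, fQc_expand, Finset.sum_mul_sum]
  simp_rw [cf_sum, cf_ccmono_mul]
  rw [← Finset.sum_product' (f := fun S T =>
    if (∑ i ∈ S, i) + (∑ i ∈ T, i) = n ∧ S.card + T.card = m
    then om ^ S.card * om' ^ T.card else 0)]
  rw [Complex.re_sum]
  simp_rw [apply_ite Complex.re, Complex.zero_re]
  rw [← Finset.sum_filter]
  have hmaps : ∀ x ∈ ((Finset.Icc 1 p).powerset ×ˢ (Finset.Icc 1 p).powerset).filter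
      (fun x : Finset ℕ × Finset ℕ =>
        (∑ i ∈ x.1, i) + (∑ i ∈ x.2, i) = n ∧ x.1.card + x.2.card = m),
      (((∑ i ∈ x.1, i), x.1.card) : ℕ × ℕ)
        ∈ Finset.range (n + 1) ×ˢ Finset.range (m + 1) := by
    intro x hx
    rw [Finset.mem_filter] at hx
    rw [Finset.mem_product, Finset.mem_range, Finset.mem_range]
    omega
  rw [← Finset.sum_fiberwise_of_maps_to hmaps, Finset.sum_product]
  refine Finset.sum_congr rfl fun k hk => Finset.sum_congr rfl fun l hl => ?_
  rw [Finset.mem_range] at hk hl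
  have hset : (((Finset.Icc 1 p).powerset ×ˢ (Finset.Icc 1 p).powerset).filter
      (fun x : Finset ℕ × Finset ℕ =>
        (∑ i ∈ x.1, i) + (∑ i ∈ x.2, i) = n ∧ x.1.card + x.2.card = m)).filter
      (fun x => (((∑ i ∈ x.1, i), x.1.card) : ℕ × ℕ) = (k, l))
      = ((Finset.Icc 1 p).powerset.filter (fun S => (∑ i ∈ S, i) = k ∧ S.card = l))
        ×ˢ ((Finset.Icc 1 p).powerset.filter
          (fun T => (∑ i ∈ T, i) = n - k ∧ T.card = m - l)) := by
    ext x
    simp only [Finset.mem_filter, Finset.mem_product, Prod.mk.injEq]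
    constructor
    · rintro ⟨⟨⟨hs1, hs2⟩, h1, h2⟩, h3, h4⟩
      refine ⟨⟨hs1, h3, h4⟩, hs2, ?_, ?_⟩ <;> omega
    · rintro ⟨⟨hs1, h3, h4⟩, hs2, h5, h6⟩
      refine ⟨⟨⟨hs1, hs2⟩, ?_, ?_⟩, h3, h4⟩ <;> omega
  rw [hset]
  have hcongr : ∀ x ∈ ((Finset.Icc 1 p).powerset.filter
        (fun S => (∑ i ∈ S, i) = k ∧ S.card = l))
      ×ˢ ((Finset.Icc 1 p).powerset.filter
        (fun T => (∑ i ∈ T, i) = n - k ∧ T.card = m - l)),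
      (om ^ (x : Finset ℕ × Finset ℕ).1.card * om' ^ x.2.card).re
        = Real.cos ((2 * (l : ℝ) - m) * Real.pi / 3) := by
    intro x hx
    rw [Finset.mem_product, Finset.mem_filter, Finset.mem_filter] at hx
    rw [hx.1.2.2, hx.2.2.2, re_om_pow l m (by omega)]
  rw [Finset.sum_congr rfl hcongr, Finset.sum_const, Finset.card_product,
    ← Qcard, ← Qcard, nsmul_eq_mul]
  push_cast
  ring

end
end Stmt7Aux

theorem stmt_7 (n m p : ℕ) :
    ∑ k ∈ Finset.range (n / 3 + 1), ∑ l ∈ Finset.range (m / 3 + 1),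
      (-1 : ℝ) ^ l * P (n - 3 * k) (m - 3 * l) p * Q k l p
    = ∑ k ∈ Finset.range (n + 1), ∑ l ∈ Finset.range (m + 1),
      Real.cos ((2 * (l : ℝ) - m) * Real.pi / 3) * Q (n - k) (m - l) p * Q k l p := by
  have h1 := Stmt7Aux.lhs_eq n m p
  have h2 := Stmt7Aux.middle_eq n m p
  have h3 : Stmt7Aux.cf (Stmt7Aux.fQc Stmt7Aux.om p * Stmt7Aux.fQc Stmt7Aux.om' p) n m
      = Stmt7Aux.cf (Stmt7Aux.Gp p) n m := by
    rw [Stmt7Aux.fQc_mul_fQc Stmt7Aux.om Stmt7Aux.om' Stmt7Aux.om_mul_om'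
      Stmt7Aux.om_add_om']
  have h4 := Stmt7Aux.rhs_eq n m p
  have hL : ((∑ k ∈ Finset.range (n / 3 + 1), ∑ l ∈ Finset.range (m / 3 + 1),
      (-1 : ℝ) ^ l * P (n - 3 * k) (m - 3 * l) p * Q k l p : ℝ) : ℂ)
      = ∑ k ∈ Finset.range (n / 3 + 1), ∑ l ∈ Finset.range (m / 3 + 1),
      ((-1 : ℂ) ^ l * P (n - 3 * k) (m - 3 * l) p * Q k l p) := by
    push_cast
    rfl
  calc ∑ k ∈ Finset.range (n / 3 + 1), ∑ l ∈ Finset.range (m / 3 + 1),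
      (-1 : ℝ) ^ l * P (n - 3 * k) (m - 3 * l) p * Q k l p
      = (((∑ k ∈ Finset.range (n / 3 + 1), ∑ l ∈ Finset.range (m / 3 + 1),
        (-1 : ℝ) ^ l * P (n - 3 * k) (m - 3 * l) p * Q k l p : ℝ) : ℂ)).re :=
      (Complex.ofReal_re _).symm
    _ = (Stmt7Aux.cf (Stmt7Aux.fQc Stmt7Aux.om p * Stmt7Aux.fQc Stmt7Aux.om' p) n m).re := by
      rw [hL, h1, h2, ← h3]
    _ = _ := h4
end

section
/- For all nonnegative integers n, m, p: Σ_{k=0}^{⌊n/4⌋} Σ_{l=0}^{⌊m/4⌋} Q(n−4k, m−4l, p) · P(k, l, p) = Σ_{k=0}^{⌊n/2⌋} Σ_{l=0}^{⌊m/2⌋} (−1)^l · P(n−2k, m−2l, p) · P(k, l, p). -/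
open PowerSeries Finset
open scoped Classical

set_option maxRecDepth 8000

noncomputable section AuxPartitionGF

abbrev Rp := Polynomial ℤ

/-- Weighted version of the partial generating function property from the Archive's
proof of Euler's partition theorem: every partition is counted with weight
`w ^ (number of parts)`. -/
theorem wgf_prop {α : Type*} [CommSemiring α] (w : α) (n : ℕ) (s : Finset ℕ)
    (hs : ∀ i ∈ s, 0 < i) (c : ℕ → Set ℕ) (hc : ∀ i, i ∉ s → 0 ∈ c i) :
    ∑ π ∈ Finset.univ.filter
        (fun π : n.Partition => (∀ j, π.parts.count j ∈ c j) ∧ ∀ j ∈ π.parts, j ∈ s),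
      w ^ (Multiset.card π.parts)
      = PowerSeries.coeff n
          (∏ i ∈ s, PowerSeries.mk fun j => if i ∣ j ∧ j / i ∈ c i then w ^ (j / i) else 0) := by
  rw [coeff_prod]
  simp_rw [coeff_mk, Finset.prod_ite_zero]
  rw [← Finset.sum_filter]
  set φ : (a : Nat.Partition n) →
    a ∈ Finset.univ.filter
        (fun π : Nat.Partition n => (∀ j, π.parts.count j ∈ c j) ∧ ∀ j ∈ π.parts, j ∈ s) →
    ℕ →₀ ℕ := fun p _ => {
      toFun := fun i => Multiset.count i p.parts • i
      support := Finset.filter (fun i => i ≠ 0) p.parts.toFinset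
      mem_support_toFun := fun a => by
        simp only [smul_eq_mul, ne_eq, mul_eq_zero, Multiset.count_eq_zero]
        rw [not_or, not_not]
        simp only [Multiset.mem_toFinset, not_not, mem_filter] }
  refine Finset.sum_bij φ ?_ ?_ ?_ ?_
  · intro a ha
    simp only [φ, not_forall, not_exists, not_and, exists_prop, mem_filter]
    rw [mem_finsuppAntidiag]
    dsimp only [ne_eq, smul_eq_mul, id_eq, eq_mpr_eq_cast, le_eq_subset, Finsupp.coe_mk]
    simp only [mem_univ, forall_true_left, not_and, not_forall, exists_prop,
      mem_filter, true_and] at ha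
    refine ⟨⟨?_, fun i ↦ ?_⟩, fun i hi ↦ ⟨Dvd.intro_left _ rfl, ?_⟩⟩
    · conv_rhs => simp [← a.parts_sum]
      rw [sum_multiset_count_of_subset _ s]
      · simp only [smul_eq_mul]
      · intro i
        simp only [Multiset.mem_toFinset, not_not, mem_filter]
        apply ha.2
    · simp only [ne_eq, Multiset.mem_toFinset, not_not, mem_filter, and_imp]
      exact fun hi _ ↦ ha.2 i hi
    · rw [Nat.mul_div_cancel _ (hs i hi)]
      exact ha.1 i
  · intro p₁ hp₁ p₂ hp₂ h
    apply Nat.Partition.ext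
    simp only [true_and, mem_univ, mem_filter] at hp₁ hp₂
    ext i
    simp only [φ, ne_eq, Multiset.mem_toFinset, not_not, smul_eq_mul, Finsupp.mk.injEq] at h
    by_cases hi : i = 0
    · rw [hi]
      rw [Multiset.count_eq_zero_of_notMem]
      · rw [Multiset.count_eq_zero_of_notMem]
        intro a; exact Nat.lt_irrefl 0 (hs 0 (hp₂.2 0 a))
      intro a; exact Nat.lt_irrefl 0 (hs 0 (hp₁.2 0 a))
    · rw [← mul_left_inj' hi]
      rw [funext_iff] at h
      exact h.2 i
  · simp only [φ, mem_filter, mem_finsuppAntidiag, mem_univ, exists_prop, true_and, and_assoc]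
    rintro f ⟨hf, hf₃, hf₄⟩
    have hf' : f ∈ finsuppAntidiag s n := mem_finsuppAntidiag.mpr ⟨hf, hf₃⟩
    simp only [mem_finsuppAntidiag] at hf'
    refine ⟨⟨∑ i ∈ s, Multiset.replicate (f i / i) i, ?_, ?_⟩, ?_, ?_, ?_⟩
    · intro i hi
      simp only [exists_prop, Multiset.mem_sum, mem_map, Function.Embedding.coeFn_mk] at hi
      rcases hi with ⟨t, ht, z⟩
      apply hs
      rwa [Multiset.eq_of_mem_replicate z]
    · simp_rw [Multiset.sum_sum, Multiset.sum_replicate, Nat.nsmul_eq_mul]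
      rw [← hf'.1]
      refine sum_congr rfl fun i hi => Nat.div_mul_cancel ?_
      exact (hf₄ i hi).1
    · intro i
      simp_rw [Multiset.count_sum', Multiset.count_replicate, sum_ite_eq']
      split_ifs with h
      · have := (hf₄ i h).2
        exact this
      · exact hc _ h
    · intro i hi
      rw [Multiset.mem_sum] at hi
      rcases hi with ⟨j, hj₁, hj₂⟩
      rwa [Multiset.eq_of_mem_replicate hj₂]
    · ext i
      simp_rw [Multiset.count_sum', Multiset.count_replicate, sum_ite_eq']
      simp only [ne_eq, Multiset.mem_toFinset, not_not, smul_eq_mul, ite_mul,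
        zero_mul, Finsupp.coe_mk]
      split_ifs with h
      · apply Nat.div_mul_cancel
        exact (hf₄ i h).1
      · apply symm
        rw [← Finsupp.notMem_support_iff]
        exact notMem_mono hf'.2 h
  · intro a ha
    simp only [mem_univ, forall_true_left, mem_filter, true_and] at ha
    simp only [φ, Finsupp.coe_mk, smul_eq_mul]
    have h1 : ∀ i ∈ s, (Multiset.count i a.parts * i) / i = Multiset.count i a.parts :=
      fun i hi => Nat.mul_div_cancel _ (hs i hi)
    rw [Finset.prod_congr rfl (fun i hi => by rw [h1 i hi])]
    rw [Finset.prod_pow_eq_pow_sum]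
    congr 1
    rw [← Multiset.toFinset_sum_count_eq a.parts]
    apply Finset.sum_subset
    · intro i hi
      exact ha.2 i (Multiset.mem_toFinset.mp hi)
    · intro i _ hi
      exact Multiset.count_eq_zero_of_notMem (fun h => hi (Multiset.mem_toFinset.mpr h))

/-- geometric-type factor: `∑_k w^k x^(i*k)` -/
def gser (w : Rp) (i : ℕ) : PowerSeries Rp :=
  PowerSeries.mk fun j => if i ∣ j then w ^ (j / i) else 0

/-- distinct-type factor: `1 + w x^i` with `w = Y` -/
def gserQ (i : ℕ) : PowerSeries Rp :=
  PowerSeries.mk fun j => if i ∣ j ∧ j / i ≤ 1 then (Polynomial.X : Rp) ^ (j / i) else 0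

def PW (w : Rp) (k p : ℕ) : Rp :=
  ∑ π ∈ Finset.univ.filter (fun π : k.Partition => ∀ j ∈ π.parts, j ≤ p),
    w ^ (Multiset.card π.parts)

def QW (k p : ℕ) : Rp :=
  ∑ π ∈ Finset.univ.filter
      (fun π : k.Partition => π.parts.Nodup ∧ ∀ j ∈ π.parts, j ≤ p),
    (Polynomial.X : Rp) ^ (Multiset.card π.parts)

theorem gfP (w : Rp) (n p : ℕ) :
    PowerSeries.coeff n (∏ i ∈ Finset.Ioc 0 p, gser w i) = PW w n p := by
  have h := wgf_prop (α := Rp) w n (Finset.Ioc 0 p) (fun i hi => (Finset.mem_Ioc.mp hi).1)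
    (fun _ => Set.univ) (fun _ _ => trivial)
  rw [PW]
  simp only [gser]
  convert h.symm using 2 with π
  · apply Finset.prod_congr rfl
    intro i _
    ext j
    simp [coeff_mk]
  · apply Finset.filter_congr
    intro π _
    simp only [Set.mem_univ, forall_const, true_and, Finset.mem_Ioc]
    constructor
    · intro h j hj
      exact ⟨π.parts_pos hj, h j hj⟩
    · intro h j hj
      exact (h j hj).2

theorem gfQ (n p : ℕ) :
    PowerSeries.coeff n (∏ i ∈ Finset.Ioc 0 p, gserQ i) = QW n p := by
  have h := wgf_prop (α := Rp) (Polynomial.X : Rp) n (Finset.Ioc 0 p)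
    (fun i hi => (Finset.mem_Ioc.mp hi).1) (fun _ => {k | k ≤ 1}) (fun _ _ => Nat.zero_le 1)
  rw [QW]
  simp only [gserQ]
  convert h.symm using 2 with π
  · apply Finset.prod_congr rfl
    intro i _
    ext j
    simp only [coeff_mk, Set.mem_setOf_eq]
  · apply Finset.filter_congr
    intro π _
    simp only [Set.mem_setOf_eq, Finset.mem_Ioc, Multiset.nodup_iff_count_le_one]
    constructor
    · rintro ⟨h1, h2⟩
      exact ⟨h1, fun j hj => ⟨π.parts_pos hj, h2 j hj⟩⟩
    · rintro ⟨h1, h2⟩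
      exact ⟨h1, fun j hj => (h2 j hj).2⟩

theorem scale_sum (w : Rp) (d : ℕ) (hd : 0 < d) (k p : ℕ) :
    ∑ π ∈ Finset.univ.filter
        (fun π : (d * k).Partition => ∀ j ∈ π.parts, d ∣ j ∧ j / d ≤ p),
      w ^ (Multiset.card π.parts) = PW w k p := by
  rw [PW]
  refine Finset.sum_bij'
    (fun π hπ => ⟨π.parts.map (· / d), ?_, ?_⟩)
    (fun τ hτ => ⟨τ.parts.map (d * ·), ?_, ?_⟩) ?_ ?_ ?_ ?_ ?_
  · intro j hj
    simp only [Multiset.mem_map] at hj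
    obtain ⟨x, hx, rfl⟩ := hj
    simp only [mem_filter, mem_univ, true_and] at hπ
    have h1 := (hπ x hx).1
    have h2 := π.parts_pos hx
    exact Nat.div_pos (Nat.le_of_dvd h2 h1) hd
  · simp only [mem_filter, mem_univ, true_and] at hπ
    have : d * (π.parts.map (· / d)).sum = d * k := by
      rw [← Multiset.sum_map_mul_left]
      calc (π.parts.map fun x => d * (x / d)).sum
          = (π.parts.map id).sum := by
            apply congrArg
            apply Multiset.map_congr rfl
            intro x hx
            exact Nat.mul_div_cancel' (hπ x hx).1
        _ = d * k := by rw [Multiset.map_id]; exact π.parts_sum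
    exact Nat.eq_of_mul_eq_mul_left hd this
  · intro j hj
    simp only [Multiset.mem_map] at hj
    obtain ⟨x, hx, rfl⟩ := hj
    exact Nat.mul_pos hd (τ.parts_pos hx)
  · rw [Multiset.sum_map_mul_left, Multiset.map_id', τ.parts_sum]
  · intro π hπ
    simp only [mem_filter, mem_univ, true_and] at hπ ⊢
    intro j hj
    simp only [Multiset.mem_map] at hj
    obtain ⟨x, hx, rfl⟩ := hj
    exact (hπ x hx).2
  · intro τ hτ
    simp only [mem_filter, mem_univ, true_and] at hτ ⊢
    intro j hj
    simp only [Multiset.mem_map] at hj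
    obtain ⟨x, hx, rfl⟩ := hj
    exact ⟨Dvd.intro _ rfl, by rw [Nat.mul_div_cancel_left _ hd]; exact hτ x hx⟩
  · intro π hπ
    simp only [mem_filter, mem_univ, true_and] at hπ
    apply Nat.Partition.ext
    simp only [Multiset.map_map]
    calc (π.parts.map fun x => d * (x / d))
        = π.parts.map id := by
          apply Multiset.map_congr rfl
          intro x hx
          exact Nat.mul_div_cancel' (hπ x hx).1
      _ = π.parts := Multiset.map_id _
  · intro τ hτ
    apply Nat.Partition.ext
    simp only [Multiset.map_map]
    calc (τ.parts.map fun x => (d * x) / d)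
        = τ.parts.map id := by
          apply Multiset.map_congr rfl
          intro x hx
          exact Nat.mul_div_cancel_left _ hd
      _ = τ.parts := Multiset.map_id _
  · intro π hπ
    rw [Multiset.card_map]

theorem gf_scaled (w : Rp) (d : ℕ) (hd : 0 < d) (n p : ℕ) :
    PowerSeries.coeff n (∏ i ∈ Finset.Ioc 0 p, gser w (d * i))
      = if d ∣ n then PW w (n / d) p else 0 := by
  have hemb : Function.Injective (fun i => d * i : ℕ → ℕ) :=
    fun a b h => Nat.eq_of_mul_eq_mul_left hd h
  have hprod : (∏ i ∈ Finset.Ioc 0 p, gser w (d * i))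
      = ∏ i ∈ (Finset.Ioc 0 p).map ⟨_, hemb⟩, gser w i := by
    rw [Finset.prod_map]; rfl
  rw [hprod]
  have hs : ∀ i ∈ (Finset.Ioc 0 p).map ⟨_, hemb⟩, 0 < i := by
    intro i hi
    simp only [Finset.mem_map, Function.Embedding.coeFn_mk, Finset.mem_Ioc] at hi
    obtain ⟨a, ⟨ha, _⟩, rfl⟩ := hi
    exact Nat.mul_pos hd ha
  have h := wgf_prop (α := Rp) w n _ hs (fun _ => Set.univ) (fun _ _ => trivial)
  have key : PowerSeries.coeff n (∏ i ∈ (Finset.Ioc 0 p).map ⟨_, hemb⟩, gser w i)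
      = ∑ π ∈ Finset.univ.filter
          (fun π : n.Partition => ∀ j ∈ π.parts, d ∣ j ∧ j / d ≤ p),
        w ^ (Multiset.card π.parts) := by
    simp only [gser]
    convert h.symm using 2 with π
    · apply Finset.prod_congr rfl
      intro i _
      ext j
      simp [coeff_mk]
    · apply Finset.filter_congr
      intro π _
      simp only [Set.mem_univ, forall_const, true_and, Finset.mem_map,
        Function.Embedding.coeFn_mk, Finset.mem_Ioc]
      constructor
      · intro hh j hj
        obtain ⟨hdvd, hle⟩ := hh j hj
        refine ⟨j / d, ⟨?_, hle⟩, (Nat.mul_div_cancel' hdvd)⟩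
        have := π.parts_pos hj
        exact Nat.div_pos (Nat.le_of_dvd this hdvd) hd
      · intro hh j hj
        obtain ⟨a, ⟨_, hap⟩, rfl⟩ := hh j hj
        exact ⟨Dvd.intro _ rfl, by rwa [Nat.mul_div_cancel_left _ hd]⟩
  rw [key]
  by_cases hdn : d ∣ n
  · obtain ⟨k, rfl⟩ := hdn
    rw [if_pos (Dvd.intro _ rfl), Nat.mul_div_cancel_left _ hd]
    exact scale_sum w d hd k p
  · rw [if_neg hdn]
    apply Finset.sum_eq_zero
    intro π hπ
    simp only [mem_filter, mem_univ, true_and] at hπ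
    exfalso
    apply hdn
    rw [← π.parts_sum]
    exact Multiset.dvd_sum fun x hx => (hπ x hx).1

theorem PW_coeff (k p m : ℕ) :
    (PW Polynomial.X k p).coeff m = (P k m p : ℤ) := by
  rw [P, Fintype.card_subtype, PW, Polynomial.finset_sum_coeff]
  simp_rw [Polynomial.coeff_X_pow]
  rw [Finset.sum_filter, Finset.card_filter]
  push_cast
  apply Finset.sum_congr rfl
  intro π _
  split_ifs <;> simp_all

theorem QW_coeff (k p m : ℕ) :
    (QW k p).coeff m = (Q k m p : ℤ) := by
  rw [Q, Fintype.card_subtype, QW, Polynomial.finset_sum_coeff]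
  simp_rw [Polynomial.coeff_X_pow]
  rw [Finset.sum_filter, Finset.card_filter]
  push_cast
  apply Finset.sum_congr rfl
  intro π _
  split_ifs <;> simp_all

theorem PW4_coeff (k p m : ℕ) :
    (PW (Polynomial.X ^ 4) k p).coeff m
      = if 4 ∣ m then (P k (m / 4) p : ℤ) else 0 := by
  rw [P, Fintype.card_subtype, PW, Polynomial.finset_sum_coeff]
  simp_rw [← pow_mul, Polynomial.coeff_X_pow]
  rw [Finset.sum_filter]
  split_ifs with hd
  · obtain ⟨l, rfl⟩ := hd
    rw [Finset.card_filter]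
    push_cast
    apply Finset.sum_congr rfl
    intro π _
    rw [Nat.mul_div_cancel_left _ (by norm_num : 0 < 4)]
    split_ifs <;> simp_all <;> omega
  · apply Finset.sum_eq_zero
    intro π _
    have : ¬ (m = 4 * Multiset.card π.parts) := fun h => hd ⟨_, h⟩
    simp [this]

theorem PWE_coeff (k p m : ℕ) :
    (PW (-(Polynomial.X ^ 2)) k p).coeff m
      = if 2 ∣ m then (-1 : ℤ) ^ (m / 2) * (P k (m / 2) p : ℤ) else 0 := by
  rw [P, Fintype.card_subtype, PW, Polynomial.finset_sum_coeff]
  have hrw : ∀ c : ℕ, (-(Polynomial.X ^ 2) : Rp) ^ c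
      = Polynomial.C ((-1 : ℤ) ^ c) * Polynomial.X ^ (2 * c) := by
    intro c
    rw [neg_pow, ← pow_mul]
    congr 1
    simp [map_pow]
  simp_rw [hrw, Polynomial.coeff_C_mul, Polynomial.coeff_X_pow]
  rw [Finset.sum_filter]
  split_ifs with hd
  · obtain ⟨l, rfl⟩ := hd
    rw [Finset.card_filter]
    push_cast
    rw [Finset.mul_sum, Nat.mul_div_cancel_left _ (by norm_num : 0 < 2)]
    apply Finset.sum_congr rfl
    intro π _
    split_ifs with h1 h2 h3 <;> simp_all
    all_goals (try omega)
    all_goals (have hc : Multiset.card π.parts = l := by omega)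
    all_goals rw [hc]
  · apply Finset.sum_eq_zero
    intro π _
    have : ¬ (m = 2 * Multiset.card π.parts) := fun h => hd ⟨_, h⟩
    simp [this]

lemma coeff_one_sub_mul (a : Rp) (t : ℕ) (F : PowerSeries Rp) (j : ℕ) :
    PowerSeries.coeff j ((1 - PowerSeries.C a * X ^ t) * F)
      = PowerSeries.coeff j F
        - (if t ≤ j then a * PowerSeries.coeff (j - t) F else 0) := by
  rw [sub_mul, one_mul, map_sub]
  congr 1
  have h : (PowerSeries.C a * X ^ t) * F = F * X ^ t * PowerSeries.C a := by ring
  rw [h, PowerSeries.coeff_mul_C, PowerSeries.coeff_mul_X_pow']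
  split_ifs <;> ring

lemma gser_inv (w : Rp) (i : ℕ) (hi : 0 < i) :
    (1 - PowerSeries.C w * X ^ i) * gser w i = 1 := by
  ext j
  rw [coeff_one_sub_mul]
  simp only [gser, coeff_mk, coeff_one]
  rcases Nat.eq_zero_or_pos j with rfl | hj
  · simp [hi.ne', Nat.le_zero]
  · rw [if_neg hj.ne']
    by_cases hij : i ∣ j
    · obtain ⟨q, rfl⟩ := hij
      have hq : q ≠ 0 := by rintro rfl; simp at hj
      obtain ⟨r, rfl⟩ := Nat.exists_eq_succ_of_ne_zero hq
      rw [Nat.mul_succ]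
      have h1 : (i * r + i) / i = r + 1 := by
        rw [← Nat.mul_succ, Nat.mul_div_cancel_left _ hi]
      have h3 : i ≤ i * r + i := Nat.le_add_left i (i * r)
      rw [if_pos (by exact ⟨r + 1, by ring⟩), h1, if_pos h3, Nat.add_sub_cancel,
        if_pos (dvd_mul_right i r), Nat.mul_div_cancel_left _ hi]
      rw [pow_succ]
      ring
    · rw [if_neg hij]
      split_ifs with hle hdvd
      · exfalso
        apply hij
        have := Nat.dvd_add hdvd (dvd_refl i)
        rwa [Nat.sub_add_cancel hle] at this
      · simp
      · simp

lemma gserQ_eq (i : ℕ) (hi : 0 < i) :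
    gserQ i = 1 + PowerSeries.C (Polynomial.X : Rp) * X ^ i := by
  ext j
  simp only [gserQ, coeff_mk, map_add, coeff_one, PowerSeries.coeff_C_mul, coeff_X_pow]
  rcases Nat.eq_zero_or_pos j with rfl | hj
  · simp [hi.ne', eq_comm]
  · rw [if_neg hj.ne']
    by_cases hji : j = i
    · subst hji
      rw [if_pos ⟨dvd_refl j, by rw [Nat.div_self hj]⟩, Nat.div_self hj, if_pos rfl]
      simp
    · rw [if_neg hji, mul_zero, zero_add]
      rw [if_neg]
      rintro ⟨⟨q, rfl⟩, hle⟩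
      rw [Nat.mul_div_cancel_left _ hi] at hle
      interval_cases q
      · simp at hj
      · simp at hji

/-- the key per-factor identity -/
lemma factor_identity (i : ℕ) (hi : 0 < i) :
    gserQ i * gser (Polynomial.X ^ 4) (4 * i)
      = gser Polynomial.X i * gser (-(Polynomial.X ^ 2)) (2 * i) := by
  set Y : Rp := Polynomial.X
  set a : PowerSeries Rp := PowerSeries.C Y * X ^ i with ha
  set b : PowerSeries Rp := PowerSeries.C (Y ^ 2) * X ^ (2 * i) with hb
  have hab : a ^ 2 = b := by
    rw [ha, hb, mul_pow, ← map_pow, ← pow_mul, mul_comm i 2]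
  have u1 : (1 - a) * gser Y i = 1 := gser_inv Y i hi
  have u2 : (1 - PowerSeries.C (Y ^ 4) * X ^ (4 * i)) * gser (Y ^ 4) (4 * i) = 1 :=
    gser_inv _ _ (by omega)
  have u3 : (1 + b) * gser (-(Y ^ 2)) (2 * i) = 1 := by
    have := gser_inv (-(Y ^ 2)) (2 * i) (by omega)
    rwa [map_neg, neg_mul, sub_neg_eq_add] at this
  have hb2 : b ^ 2 = PowerSeries.C (Y ^ 4) * X ^ (4 * i) := by
    have h24 : 2 * i * 2 = 4 * i := by ring
    rw [hb, mul_pow, ← map_pow, ← pow_mul, ← pow_mul, h24]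
  set M : PowerSeries Rp := (1 - a) * (1 + b) with hM
  have hML : M * (gserQ i * gser (Y ^ 4) (4 * i)) = 1 := by
    rw [gserQ_eq i hi]
    calc M * ((1 + a) * gser (Y ^ 4) (4 * i))
        = ((1 - a) * (1 + a) * (1 + b)) * gser (Y ^ 4) (4 * i) := by rw [hM]; ring
      _ = ((1 - b) * (1 + b)) * gser (Y ^ 4) (4 * i) := by rw [← hab]; ring_nf
      _ = (1 - PowerSeries.C (Y ^ 4) * X ^ (4 * i)) * gser (Y ^ 4) (4 * i) := by
          rw [← hb2]; ring_nf
      _ = 1 := u2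
  have hMR : M * (gser Y i * gser (-(Y ^ 2)) (2 * i)) = 1 := by
    calc M * (gser Y i * gser (-(Y ^ 2)) (2 * i))
        = ((1 - a) * gser Y i) * ((1 + b) * gser (-(Y ^ 2)) (2 * i)) := by rw [hM]; ring
      _ = 1 := by rw [u1, u3, one_mul]
  calc gserQ i * gser (Y ^ 4) (4 * i)
      = (gserQ i * gser (Y ^ 4) (4 * i)) * (M * (gser Y i * gser (-(Y ^ 2)) (2 * i))) := by
        rw [hMR, mul_one]
    _ = (M * (gserQ i * gser (Y ^ 4) (4 * i))) * (gser Y i * gser (-(Y ^ 2)) (2 * i)) := by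
        ring
    _ = gser Y i * gser (-(Y ^ 2)) (2 * i) := by rw [hML, one_mul]

/-- reindex a sum over multiples of d -/
theorem sum_div_reindex {M : Type*} [AddCommMonoid M] (d N : ℕ) (hd : 0 < d) (F : ℕ → M) :
    ∑ k ∈ Finset.range (N + 1), (if d ∣ k then F k else 0)
      = ∑ j ∈ Finset.range (N / d + 1), F (d * j) := by
  rw [← Finset.sum_filter]
  refine Finset.sum_bij' (fun k _ => k / d) (fun j _ => d * j) ?_ ?_ ?_ ?_ ?_
  · intro k hk
    simp only [mem_filter, Finset.mem_range, Nat.lt_succ_iff] at hk ⊢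
    exact Nat.div_le_div_right hk.1
  · intro j hj
    simp only [Finset.mem_range, Nat.lt_succ_iff, mem_filter] at hj ⊢
    exact ⟨le_trans (Nat.mul_le_mul_left d hj) (Nat.mul_div_le N d), Dvd.intro _ rfl⟩
  · intro k hk
    simp only [mem_filter, Finset.mem_range] at hk
    exact Nat.mul_div_cancel' hk.2
  · intro j hj
    exact Nat.mul_div_cancel_left _ hd
  · intro k hk
    simp only [mem_filter, Finset.mem_range] at hk
    rw [Nat.mul_div_cancel' hk.2]

theorem antidiag_div {M : Type*} [CommRing M] (N d : ℕ) (hd : 0 < d) (f g : ℕ → M) :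
    ∑ ab ∈ Finset.HasAntidiagonal.antidiagonal N, f ab.1 * (if d ∣ ab.2 then g (ab.2 / d) else 0)
      = ∑ j ∈ Finset.range (N / d + 1), f (N - d * j) * g j := by
  rw [← Finset.HasAntidiagonal.map_swap_antidiagonal, Finset.sum_map]
  simp only [Function.Embedding.coeFn_mk, Prod.snd_swap, Prod.fst_swap]
  rw [Finset.Nat.sum_antidiagonal_eq_sum_range_succ_mk]
  have : ∀ k ∈ Finset.range (N + 1),
      f (N - k) * (if d ∣ k then g (k / d) else 0)
        = (if d ∣ k then f (N - k) * g (k / d) else 0) := by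
    intro k _
    split_ifs <;> ring
  rw [Finset.sum_congr rfl this, sum_div_reindex d N hd (fun k => f (N - k) * g (k / d))]
  apply Finset.sum_congr rfl
  intro j _
  rw [Nat.mul_div_cancel_left _ hd]

end AuxPartitionGF

theorem stmt_8 (n m p : ℕ) :
    ∑ k ∈ Finset.range (n / 4 + 1), ∑ l ∈ Finset.range (m / 4 + 1),
      ((Q (n - 4 * k) (m - 4 * l) p : ℤ) * P k l p)
    = ∑ k ∈ Finset.range (n / 2 + 1), ∑ l ∈ Finset.range (m / 2 + 1),
      (-1 : ℤ) ^ l * P (n - 2 * k) (m - 2 * l) p * P k l p := by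
  classical
  have main : (∏ i ∈ Finset.Ioc 0 p, gserQ i)
        * (∏ i ∈ Finset.Ioc 0 p, gser (Polynomial.X ^ 4) (4 * i))
      = (∏ i ∈ Finset.Ioc 0 p, gser Polynomial.X i)
        * (∏ i ∈ Finset.Ioc 0 p, gser (-(Polynomial.X ^ 2)) (2 * i)) := by
    rw [← Finset.prod_mul_distrib, ← Finset.prod_mul_distrib]
    apply Finset.prod_congr rfl
    intro i hi
    exact factor_identity i (Finset.mem_Ioc.mp hi).1
  have e1 : PowerSeries.coeff n ((∏ i ∈ Finset.Ioc 0 p, gserQ i)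
        * (∏ i ∈ Finset.Ioc 0 p, gser (Polynomial.X ^ 4) (4 * i)))
      = ∑ k ∈ Finset.range (n / 4 + 1), QW (n - 4 * k) p * PW (Polynomial.X ^ 4) k p := by
    rw [PowerSeries.coeff_mul]
    have h : ∀ ab ∈ Finset.HasAntidiagonal.antidiagonal n,
        PowerSeries.coeff ab.1 (∏ i ∈ Finset.Ioc 0 p, gserQ i)
          * PowerSeries.coeff ab.2 (∏ i ∈ Finset.Ioc 0 p, gser (Polynomial.X ^ 4) (4 * i))
        = QW ab.1 p * (if 4 ∣ ab.2 then PW (Polynomial.X ^ 4) (ab.2 / 4) p else 0) := by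
      intro ab _
      rw [gfQ, gf_scaled _ 4 (by norm_num)]
    rw [Finset.sum_congr rfl h,
      antidiag_div n 4 (by norm_num) (fun a => QW a p) (fun j => PW (Polynomial.X ^ 4) j p)]
  have e2 : PowerSeries.coeff n ((∏ i ∈ Finset.Ioc 0 p, gser Polynomial.X i)
        * (∏ i ∈ Finset.Ioc 0 p, gser (-(Polynomial.X ^ 2)) (2 * i)))
      = ∑ k ∈ Finset.range (n / 2 + 1),
          PW Polynomial.X (n - 2 * k) p * PW (-(Polynomial.X ^ 2)) k p := by
    rw [PowerSeries.coeff_mul]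
    have h : ∀ ab ∈ Finset.HasAntidiagonal.antidiagonal n,
        PowerSeries.coeff ab.1 (∏ i ∈ Finset.Ioc 0 p, gser Polynomial.X i)
          * PowerSeries.coeff ab.2 (∏ i ∈ Finset.Ioc 0 p, gser (-(Polynomial.X ^ 2)) (2 * i))
        = PW Polynomial.X ab.1 p
            * (if 2 ∣ ab.2 then PW (-(Polynomial.X ^ 2)) (ab.2 / 2) p else 0) := by
      intro ab _
      rw [gfP, gf_scaled _ 2 (by norm_num)]
    rw [Finset.sum_congr rfl h,
      antidiag_div n 2 (by norm_num) (fun a => PW Polynomial.X a p)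
        (fun j => PW (-(Polynomial.X ^ 2)) j p)]
  have E1 : Polynomial.coeff (PowerSeries.coeff n ((∏ i ∈ Finset.Ioc 0 p, gserQ i)
        * (∏ i ∈ Finset.Ioc 0 p, gser (Polynomial.X ^ 4) (4 * i)))) m
      = ∑ k ∈ Finset.range (n / 4 + 1), ∑ l ∈ Finset.range (m / 4 + 1),
          ((Q (n - 4 * k) (m - 4 * l) p : ℤ) * P k l p) := by
    rw [e1, Polynomial.finset_sum_coeff]
    apply Finset.sum_congr rfl
    intro k _
    rw [Polynomial.coeff_mul]
    have h : ∀ cd ∈ Finset.HasAntidiagonal.antidiagonal m,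
        (QW (n - 4 * k) p).coeff cd.1 * (PW (Polynomial.X ^ 4) k p).coeff cd.2
        = (Q (n - 4 * k) cd.1 p : ℤ) * (if 4 ∣ cd.2 then (P k (cd.2 / 4) p : ℤ) else 0) := by
      intro cd _
      rw [QW_coeff, PW4_coeff]
    rw [Finset.sum_congr rfl h,
      antidiag_div m 4 (by norm_num) (fun c => (Q (n - 4 * k) c p : ℤ))
        (fun l => (P k l p : ℤ))]
  have E2 : Polynomial.coeff (PowerSeries.coeff n ((∏ i ∈ Finset.Ioc 0 p, gser Polynomial.X i)
        * (∏ i ∈ Finset.Ioc 0 p, gser (-(Polynomial.X ^ 2)) (2 * i)))) m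
      = ∑ k ∈ Finset.range (n / 2 + 1), ∑ l ∈ Finset.range (m / 2 + 1),
          (-1 : ℤ) ^ l * P (n - 2 * k) (m - 2 * l) p * P k l p := by
    rw [e2, Polynomial.finset_sum_coeff]
    apply Finset.sum_congr rfl
    intro k _
    rw [Polynomial.coeff_mul]
    have h : ∀ cd ∈ Finset.HasAntidiagonal.antidiagonal m,
        (PW Polynomial.X (n - 2 * k) p).coeff cd.1 * (PW (-(Polynomial.X ^ 2)) k p).coeff cd.2
        = (P (n - 2 * k) cd.1 p : ℤ)
            * (if 2 ∣ cd.2 then ((-1 : ℤ) ^ (cd.2 / 2) * (P k (cd.2 / 2) p : ℤ)) else 0) := by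
      intro cd _
      rw [PW_coeff, PWE_coeff]
    rw [Finset.sum_congr rfl h,
      antidiag_div m 2 (by norm_num) (fun c => (P (n - 2 * k) c p : ℤ))
        (fun l => ((-1 : ℤ) ^ l * (P k l p : ℤ)))]
    apply Finset.sum_congr rfl
    intro l _
    ring
  rw [← E1, ← E2, main]
end
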